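/- arXiv:2410.01316 — 4 statements merged into one kernel-verified Lean document; each statement's English description precedes it below -/
import Mathlib

section
/- For the generalized Riesz kernel F(t) = −t^r with r > 0 and one-dimensional sliced basis function f(t) = −(√π Γ((d+r)/2) / (Γ(d/2) Γ((r+1)/2))) t^r, and x ∈ ℝ^d nonzero, the variance E_{ξ∼U(S^{d-1})}[(f(|⟨ξ,x⟩|) − F(‖x‖))²] equals ( √π Γ(r + 1/2) Γ((d+r)/2)² / (Γ((r+1)/2)² Γ(d/2) Γ(r + d/2)) − 1 ) · F(‖x‖)². -/
open Real MeasureTheory RealInnerProductSpace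

/-- The uniform (normalized surface) probability measure on the unit sphere in `ℝ^d`. -/
noncomputable def uniformSphere (d : ℕ) :
    Measure (Metric.sphere (0 : EuclideanSpace ℝ (Fin d)) 1) :=
  ((volume : Measure (EuclideanSpace ℝ (Fin d))).toSphere Set.univ)⁻¹ •
    (volume : Measure (EuclideanSpace ℝ (Fin d))).toSphere

section Aux

open Metric Set

variable {d : ℕ}

/-- One-dimensional Gaussian absolute moment. -/
lemma gauss_moment_1d {p : ℝ} (hp : 0 ≤ p) :
    ∫ t : ℝ, |t| ^ p * exp (-t ^ 2) = Gamma ((p + 1) / 2) := by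
  have h : ∫ t : ℝ, |t| ^ p * exp (-t ^ 2) = 2 * ∫ t in Set.Ioi (0:ℝ), t ^ p * exp (-t ^ 2) := by
    rw [← integral_comp_abs (f := fun t => t ^ p * exp (-t ^ 2))]
    congr 1 with t
    rw [sq_abs]
  rw [h]
  have h2 : ∫ t in Set.Ioi (0:ℝ), t ^ p * exp (-t ^ 2) =
      ∫ t in Set.Ioi (0:ℝ), t ^ p * exp (-t ^ (2:ℝ)) := by
    refine setIntegral_congr_fun measurableSet_Ioi (fun t ht => ?_)
    rw [← Real.rpow_natCast t 2]; norm_num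
  rw [h2, integral_rpow_mul_exp_neg_rpow two_pos (by linarith)]
  ring_nf

/-- `d`-dimensional Gaussian moment of the first coordinate. -/
lemma gauss_moment_coord (hd : 1 ≤ d) {p : ℝ} (hp : 0 ≤ p) :
    ∫ z : EuclideanSpace ℝ (Fin d), |z ⟨0, hd⟩| ^ p * exp (-‖z‖ ^ 2) =
      Gamma ((p + 1) / 2) * Real.sqrt π ^ (d - 1) := by
  have key := (PiLp.volume_preserving_toLp (Fin d)).integral_comp
    (MeasurableEquiv.toLp 2 (Fin d → ℝ)).measurableEmbedding
    (fun z : EuclideanSpace ℝ (Fin d) => |z ⟨0, hd⟩| ^ p * exp (-‖z‖ ^ 2))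
  rw [← key]
  have h1 : ∀ y : Fin d → ℝ,
      |(WithLp.toLp 2 y : EuclideanSpace ℝ (Fin d)) ⟨0, hd⟩| ^ p *
        exp (-‖(WithLp.toLp 2 y : EuclideanSpace ℝ (Fin d))‖ ^ 2) =
      ∏ i : Fin d, ((if i = ⟨0, hd⟩ then |y i| ^ p else 1) * exp (-(y i) ^ 2)) := by
    intro y
    rw [Finset.prod_mul_distrib, Finset.prod_ite_eq' Finset.univ (⟨0, hd⟩ : Fin d)
      (fun i => |y i| ^ p)]
    simp only [Finset.mem_univ, if_true]
    congr 1
    rw [← Real.exp_sum]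
    congr 1
    rw [EuclideanSpace.norm_eq, Real.sq_sqrt (by positivity), ← Finset.sum_neg_distrib]
    congr 1 with i
    rw [Real.norm_eq_abs, sq_abs]
  simp_rw [h1]
  rw [volume_pi, MeasureTheory.integral_fintype_prod_eq_prod (ι := Fin d)
    (f := fun i t => (if i = ⟨0, hd⟩ then |t| ^ p else 1) * exp (-t ^ 2))]
  have h2 : ∀ i : Fin d, (∫ t : ℝ, (if i = ⟨0, hd⟩ then |t| ^ p else 1) * exp (-t ^ 2)) =
      if i = ⟨0, hd⟩ then Gamma ((p + 1) / 2) else Real.sqrt π := by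
    intro i
    by_cases h : i = ⟨0, hd⟩ <;> simp only [h, if_true, if_false, one_mul]
    · exact gauss_moment_1d hp
    · have := integral_gaussian 1
      simp only [neg_mul, one_mul] at this
      rw [this, div_one]
  simp_rw [h2]
  rw [← Finset.mul_prod_erase Finset.univ _ (Finset.mem_univ (⟨0, hd⟩ : Fin d)), if_pos rfl]
  congr 1
  rw [Finset.prod_congr rfl (fun i hi => if_neg (Finset.ne_of_mem_erase hi)),
    Finset.prod_const, Finset.card_erase_of_mem (Finset.mem_univ _), Finset.card_univ,
    Fintype.card_fin]

/-- Rotation invariance: the Gaussian inner-product moment reduces to a coordinate moment. -/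
lemma gauss_moment_inner (hd : 1 ≤ d) {p : ℝ} (hp : 0 ≤ p)
    (x : EuclideanSpace ℝ (Fin d)) (hx : x ≠ 0) :
    ∫ z : EuclideanSpace ℝ (Fin d), |⟪z, x⟫| ^ p * exp (-‖z‖ ^ 2) =
      ‖x‖ ^ p * (Gamma ((p + 1) / 2) * Real.sqrt π ^ (d - 1)) := by
  rw [← gauss_moment_coord hd hp]
  set u : EuclideanSpace ℝ (Fin d) := ‖x‖⁻¹ • x with hu
  have hnx : (0:ℝ) < ‖x‖ := norm_pos_iff.2 hx
  have hun : ‖u‖ = 1 := by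
    rw [hu, norm_smul, norm_inv, norm_norm, inv_mul_cancel₀ hnx.ne']
  set w : EuclideanSpace ℝ (Fin d) := EuclideanSpace.single ⟨0, hd⟩ (1:ℝ) with hw
  have hwn : ‖w‖ = 1 := by rw [hw, EuclideanSpace.norm_single, norm_one]
  set e := (ℝ ∙ (u - w))ᗮ.reflection with he
  have heu : e u = w := Submodule.reflection_sub (by rw [hun, hwn])
  have hew : e w = u := by rw [← heu, he, Submodule.reflection_reflection]
  have key := (e.measurePreserving).integral_comp
    (e.toHomeomorph.measurableEmbedding)
    (fun z : EuclideanSpace ℝ (Fin d) => |⟪z, x⟫| ^ p * exp (-‖z‖ ^ 2))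
  rw [← key, ← integral_const_mul]
  congr 1 with y
  have h1 : ⟪e y, x⟫ = ‖x‖ * ⟪y, w⟫ := by
    have h' : ⟪e y, u⟫ = ⟪y, w⟫ := by rw [← hew, e.inner_map_map]
    rw [hu, real_inner_smul_right] at h'
    rw [← h']
    field_simp
  rw [h1, e.norm_map]
  have h2 : ⟪y, w⟫ = y ⟨0, hd⟩ := by
    rw [hw]
    simp [EuclideanSpace.inner_single_right]
  rw [h2, abs_mul, abs_of_pos hnx, Real.mul_rpow hnx.le (abs_nonneg _), mul_assoc]

/-- Polar decomposition of the Gaussian inner-product moment. -/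
lemma gauss_moment_polar (hd : 1 ≤ d) {p : ℝ} (hp : 0 ≤ p)
    (x : EuclideanSpace ℝ (Fin d)) :
    ∫ z : EuclideanSpace ℝ (Fin d), |⟪z, x⟫| ^ p * exp (-‖z‖ ^ 2) =
      (∫ ξ : sphere (0 : EuclideanSpace ℝ (Fin d)) 1,
          |⟪(ξ : EuclideanSpace ℝ (Fin d)), x⟫| ^ p
          ∂(volume : Measure (EuclideanSpace ℝ (Fin d))).toSphere) *
        ((1 / 2) * Gamma ((p + d) / 2)) := by
  haveI : Nontrivial (EuclideanSpace ℝ (Fin d)) := by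
    refine nontrivial_of_ne (EuclideanSpace.single ⟨0, hd⟩ (1:ℝ)) 0 ?_
    intro h
    have := congrArg (fun z : EuclideanSpace ℝ (Fin d) => z ⟨0, hd⟩) h
    simp at this
  set μ : Measure (EuclideanSpace ℝ (Fin d)) := volume
  set φ : EuclideanSpace ℝ (Fin d) → ℝ := fun z => |⟪z, x⟫| ^ p * exp (-‖z‖ ^ 2) with hφ
  have step1 : ∫ z, φ z ∂μ
      = ∫ z : ({(0:EuclideanSpace ℝ (Fin d))}ᶜ : Set _), φ z.1 ∂(μ.comap (↑)) := by
    rw [integral_subtype_comap (measurableSet_singleton _).compl φ, restrict_compl_singleton]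
  set G : sphere (0 : EuclideanSpace ℝ (Fin d)) 1 × Ioi (0:ℝ) → ℝ :=
    fun q => |⟪(q.1 : EuclideanSpace ℝ (Fin d)), x⟫| ^ p *
      ((q.2 : ℝ) ^ p * exp (-(q.2:ℝ) ^ 2)) with hG
  have step2 : ∫ z : ({(0:EuclideanSpace ℝ (Fin d))}ᶜ : Set _), φ z.1 ∂(μ.comap (↑)) =
      ∫ q, G q ∂(μ.toSphere.prod
        (Measure.volumeIoiPow (Module.finrank ℝ (EuclideanSpace ℝ (Fin d)) - 1))) := by
    rw [← μ.measurePreserving_homeomorphUnitSphereProd.integral_comp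
      (Homeomorph.measurableEmbedding _) G]
    refine integral_congr_ae (Filter.Eventually.of_forall fun z => ?_)
    have hz : (z : EuclideanSpace ℝ (Fin d)) ≠ 0 := z.2
    have hnz : (0:ℝ) < ‖(z : EuclideanSpace ℝ (Fin d))‖ := norm_pos_iff.2 hz
    show |⟪(z:EuclideanSpace ℝ (Fin d)), x⟫| ^ p * rexp (-‖(z:EuclideanSpace ℝ (Fin d))‖^2) = _
    simp only [hG, homeomorphUnitSphereProd_apply_fst_coe, homeomorphUnitSphereProd_apply_snd_coe]
    rw [real_inner_smul_left, abs_mul, abs_inv, abs_norm,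
      Real.mul_rpow (by positivity) (abs_nonneg _), Real.inv_rpow hnz.le]
    have hzp : ‖(z : EuclideanSpace ℝ (Fin d))‖ ^ p ≠ 0 := by positivity
    field_simp
  have step3 : ∫ q, G q ∂(μ.toSphere.prod
        (Measure.volumeIoiPow (Module.finrank ℝ (EuclideanSpace ℝ (Fin d)) - 1))) =
      (∫ ξ : sphere (0 : EuclideanSpace ℝ (Fin d)) 1,
          |⟪(ξ : EuclideanSpace ℝ (Fin d)), x⟫| ^ p ∂μ.toSphere) *
        ∫ t : Ioi (0:ℝ), (t:ℝ) ^ p * exp (-(t:ℝ) ^ 2)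
          ∂(Measure.volumeIoiPow (Module.finrank ℝ (EuclideanSpace ℝ (Fin d)) - 1)) := by
    simp only [hG]
    exact integral_prod_mul (L := ℝ)
      (fun ξ : sphere (0 : EuclideanSpace ℝ (Fin d)) 1 =>
        |⟪(ξ : EuclideanSpace ℝ (Fin d)), x⟫| ^ p)
      (fun t : Ioi (0:ℝ) => (t:ℝ) ^ p * exp (-(t:ℝ) ^ 2))
  have hrank : Module.finrank ℝ (EuclideanSpace ℝ (Fin d)) = d := finrank_euclideanSpace_fin
  have step4 : ∫ t : Ioi (0:ℝ), (t:ℝ) ^ p * exp (-(t:ℝ) ^ 2)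
        ∂(Measure.volumeIoiPow (Module.finrank ℝ (EuclideanSpace ℝ (Fin d)) - 1)) =
      (1 / 2) * Gamma ((p + d) / 2) := by
    rw [hrank]
    have h1 : (1:ℝ) ≤ d := by exact_mod_cast hd
    have hq : (-1:ℝ) < p + ((d:ℝ) - 1) := by linarith
    simp only [Measure.volumeIoiPow, ENNReal.ofReal]
    rw [integral_withDensity_eq_integral_smul ((measurable_subtype_coe.pow_const _).real_toNNReal)]
    rw [integral_subtype_comap measurableSet_Ioi
      (fun t : ℝ => Real.toNNReal (t ^ (d-1)) • (t ^ p * exp (-t ^ 2)))]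
    have heq : ∀ t ∈ Ioi (0:ℝ), Real.toNNReal (t ^ (d-1)) • (t ^ p * exp (-t ^ 2)) =
        t ^ (p + ((d:ℝ) - 1)) * exp (-t ^ (2:ℝ)) := by
      intro t ht
      have ht' : (0:ℝ) < t := ht
      rw [NNReal.smul_def, Real.coe_toNNReal _ (by positivity), smul_eq_mul]
      rw [Real.rpow_add ht', ← Real.rpow_natCast t (d-1), ← Real.rpow_natCast t 2]
      rw [Nat.cast_sub hd, Nat.cast_one, Nat.cast_ofNat]
      ring
    rw [setIntegral_congr_fun measurableSet_Ioi heq,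
      integral_rpow_mul_exp_neg_rpow two_pos hq]
    have h2 : (p + ((d:ℝ) - 1) + 1) / 2 = (p + d) / 2 := by ring
    rw [h2]
  rw [step1, step2, step3, step4]

/-- The main moment formula for the surface measure on the sphere. -/
lemma sphere_moment (hd : 1 ≤ d) {p : ℝ} (hp : 0 ≤ p)
    (x : EuclideanSpace ℝ (Fin d)) (hx : x ≠ 0) :
    ∫ ξ : sphere (0 : EuclideanSpace ℝ (Fin d)) 1,
        |⟪(ξ : EuclideanSpace ℝ (Fin d)), x⟫| ^ p
        ∂(volume : Measure (EuclideanSpace ℝ (Fin d))).toSphere =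
      2 * Gamma ((p + 1) / 2) * Real.sqrt π ^ (d - 1) / Gamma ((p + d) / 2) * ‖x‖ ^ p := by
  have h1 := gauss_moment_inner hd hp x hx
  have h2 := gauss_moment_polar hd hp x
  have h3 : (0:ℝ) < Gamma ((p + d) / 2) := by
    apply Real.Gamma_pos_of_pos
    have h1 : (1:ℝ) ≤ d := by exact_mod_cast hd
    linarith
  rw [h1] at h2
  field_simp at h2 ⊢
  linarith [h2]

end Aux

theorem variance_riesz_kernel (d : ℕ) (hd : 2 ≤ d) (r : ℝ) (hr : 0 < r)
    (F f : ℝ → ℝ) (hF : ∀ t : ℝ, F t = -(t ^ r))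
    (hf : ∀ t : ℝ, f t =
      -((Real.sqrt π * Gamma (((d : ℝ) + r) / 2) /
        (Gamma ((d : ℝ) / 2) * Gamma ((r + 1) / 2))) * t ^ r))
    (x : EuclideanSpace ℝ (Fin d)) (hx : x ≠ 0) :
    ∫ ξ : Metric.sphere (0 : EuclideanSpace ℝ (Fin d)) 1,
        (f |⟪(ξ : EuclideanSpace ℝ (Fin d)), x⟫| - F ‖x‖) ^ 2 ∂(uniformSphere d) =
      (Real.sqrt π * Gamma (r + 1/2) * Gamma (((d : ℝ) + r) / 2) ^ 2 /
          (Gamma ((r + 1) / 2) ^ 2 * Gamma ((d : ℝ) / 2) * Gamma (r + (d : ℝ) / 2)) - 1) *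
        F ‖x‖ ^ 2 := by
  have hd1 : 1 ≤ d := le_trans one_le_two hd
  have hd1' : (1:ℝ) ≤ d := by exact_mod_cast hd1
  set μ := (volume : Measure (EuclideanSpace ℝ (Fin d))).toSphere with hμ
  set c₁ : ℝ := Real.sqrt π * Gamma (((d : ℝ) + r) / 2) /
    (Gamma ((d : ℝ) / 2) * Gamma ((r + 1) / 2)) with hc₁
  set K : ℝ := ‖x‖ ^ r with hK
  -- pointwise expansion
  have hpt : ∀ ξ : Metric.sphere (0 : EuclideanSpace ℝ (Fin d)) 1,
      (f |⟪(ξ : EuclideanSpace ℝ (Fin d)), x⟫| - F ‖x‖) ^ 2 =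
        K ^ 2 * |⟪(ξ : EuclideanSpace ℝ (Fin d)), x⟫| ^ (0:ℝ)
        - 2 * c₁ * K * |⟪(ξ : EuclideanSpace ℝ (Fin d)), x⟫| ^ r
        + c₁ ^ 2 * |⟪(ξ : EuclideanSpace ℝ (Fin d)), x⟫| ^ (2 * r) := by
    have expand : ∀ t : ℝ, 0 ≤ t →
        (-(c₁ * t ^ r) - -(‖x‖ ^ r)) ^ 2 =
          K ^ 2 * t ^ (0:ℝ) - 2 * c₁ * K * t ^ r + c₁ ^ 2 * t ^ (2 * r) := by
      intro t ht
      have h0 : t ^ (0:ℝ) = 1 := Real.rpow_zero t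
      have h2 : t ^ (2 * r) = (t ^ r) ^ 2 := by
        rw [mul_comm, Real.rpow_mul ht, ← Real.rpow_natCast (t ^ r) 2]
        norm_num
      rw [h0, h2, hK]
      ring
    intro ξ
    rw [hf, hF]
    exact expand _ (abs_nonneg _)
  -- integrability
  have hcont : ∀ p : ℝ, 0 < p → Continuous (fun ξ : Metric.sphere
      (0 : EuclideanSpace ℝ (Fin d)) 1 => |⟪(ξ : EuclideanSpace ℝ (Fin d)), x⟫| ^ p) := by
    intro p hp
    have h1 : Continuous (fun ξ : Metric.sphere (0 : EuclideanSpace ℝ (Fin d)) 1 =>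
        |⟪(ξ : EuclideanSpace ℝ (Fin d)), x⟫|) :=
      (continuous_subtype_val.inner continuous_const).abs
    have h2 : Continuous (fun s : ℝ => s ^ p) :=
      continuous_iff_continuousAt.2 fun s => Real.continuousAt_rpow_const s p (Or.inr hp.le)
    exact h2.comp h1
  have hint : ∀ p : ℝ, 0 < p → Integrable (fun ξ : Metric.sphere
      (0 : EuclideanSpace ℝ (Fin d)) 1 => |⟪(ξ : EuclideanSpace ℝ (Fin d)), x⟫| ^ p) μ := by
    intro p hp
    refine Continuous.integrable_of_hasCompactSupport (hcont p hp) ?_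
    exact IsCompact.of_isClosed_subset isCompact_univ (isClosed_tsupport _) (Set.subset_univ _)
  have hint0 : Integrable (fun ξ : Metric.sphere
      (0 : EuclideanSpace ℝ (Fin d)) 1 => |⟪(ξ : EuclideanSpace ℝ (Fin d)), x⟫| ^ (0:ℝ)) μ := by
    simp only [Real.rpow_zero]
    exact integrable_const 1
  -- integral over toSphere
  have hIμ : ∫ ξ : Metric.sphere (0 : EuclideanSpace ℝ (Fin d)) 1,
      (f |⟪(ξ : EuclideanSpace ℝ (Fin d)), x⟫| - F ‖x‖) ^ 2 ∂μ =
      K ^ 2 * (∫ ξ : Metric.sphere (0 : EuclideanSpace ℝ (Fin d)) 1,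
          |⟪(ξ : EuclideanSpace ℝ (Fin d)), x⟫| ^ (0:ℝ) ∂μ)
      - 2 * c₁ * K * (∫ ξ : Metric.sphere (0 : EuclideanSpace ℝ (Fin d)) 1,
          |⟪(ξ : EuclideanSpace ℝ (Fin d)), x⟫| ^ r ∂μ)
      + c₁ ^ 2 * (∫ ξ : Metric.sphere (0 : EuclideanSpace ℝ (Fin d)) 1,
          |⟪(ξ : EuclideanSpace ℝ (Fin d)), x⟫| ^ (2 * r) ∂μ) := by
    have hA : Integrable (fun ξ : Metric.sphere (0 : EuclideanSpace ℝ (Fin d)) 1 =>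
        K ^ 2 * |⟪(ξ : EuclideanSpace ℝ (Fin d)), x⟫| ^ (0:ℝ)
        - 2 * c₁ * K * |⟪(ξ : EuclideanSpace ℝ (Fin d)), x⟫| ^ r) μ :=
      (hint0.const_mul _).sub ((hint r hr).const_mul _)
    have hB : Integrable (fun ξ : Metric.sphere (0 : EuclideanSpace ℝ (Fin d)) 1 =>
        c₁ ^ 2 * |⟪(ξ : EuclideanSpace ℝ (Fin d)), x⟫| ^ (2 * r)) μ :=
      (hint (2*r) (by linarith)).const_mul _
    rw [integral_congr_ae (Filter.Eventually.of_forall hpt), integral_add hA hB,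
      integral_sub (hint0.const_mul _) ((hint r hr).const_mul _),
      integral_const_mul, integral_const_mul, integral_const_mul]
  -- the three moments
  have hM0 := sphere_moment hd1 le_rfl x hx
  have hMr := sphere_moment hd1 hr.le x hx
  have hM2r := sphere_moment hd1 (by linarith : (0:ℝ) ≤ 2*r) x hx
  -- normalization constant
  have hC : (μ Set.univ).toReal =
      2 * Gamma ((0 + 1) / 2) * Real.sqrt π ^ (d - 1) / Gamma ((0 + d) / 2) := by
    have := hM0
    simp only [Real.rpow_zero, mul_one] at this
    rw [← this, integral_const, smul_eq_mul, mul_one]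
    rfl
  -- positivity facts
  have hπ : (0:ℝ) < Real.sqrt π := Real.sqrt_pos.2 Real.pi_pos
  have hS : (0:ℝ) < Real.sqrt π ^ (d - 1) := pow_pos hπ _
  have hGd : (0:ℝ) < Gamma ((d:ℝ) / 2) := Real.Gamma_pos_of_pos (by linarith)
  have hG1 : (0:ℝ) < Gamma ((r + 1) / 2) := Real.Gamma_pos_of_pos (by linarith)
  have hGdr : (0:ℝ) < Gamma ((r + d) / 2) := Real.Gamma_pos_of_pos (by linarith)
  have hG2 : (0:ℝ) < Gamma (r + 1/2) := Real.Gamma_pos_of_pos (by linarith)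
  have hGrd2 : (0:ℝ) < Gamma (r + (d:ℝ)/2) := Real.Gamma_pos_of_pos (by linarith)
  have hN : (0:ℝ) < ‖x‖ := norm_pos_iff.2 hx
  -- rewrite Gamma arguments
  have e1 : ((0:ℝ) + 1) / 2 = 1/2 := by norm_num
  have e2 : ((0:ℝ) + d) / 2 = (d:ℝ)/2 := by ring
  have e3 : (r + 1) / 2 = (r + 1)/2 := rfl
  have e4 : (2*r + 1) / 2 = r + 1/2 := by ring
  have e5 : (2*r + d) / 2 = r + (d:ℝ)/2 := by ring
  have e6 : ((d:ℝ) + r) / 2 = (r + d)/2 := by ring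
  rw [e1, e2] at hM0 hC
  rw [e4, e5] at hM2r
  rw [Real.Gamma_one_half_eq] at hM0 hC
  -- pass from uniformSphere to toSphere
  have huni : ∫ ξ : Metric.sphere (0 : EuclideanSpace ℝ (Fin d)) 1,
      (f |⟪(ξ : EuclideanSpace ℝ (Fin d)), x⟫| - F ‖x‖) ^ 2 ∂(uniformSphere d) =
      ((μ Set.univ).toReal)⁻¹ * ∫ ξ : Metric.sphere (0 : EuclideanSpace ℝ (Fin d)) 1,
        (f |⟪(ξ : EuclideanSpace ℝ (Fin d)), x⟫| - F ‖x‖) ^ 2 ∂μ := by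
    rw [uniformSphere, integral_smul_measure, smul_eq_mul, ENNReal.toReal_inv]
  rw [huni, hIμ, hM0, hMr, hM2r, hC, hF]
  have hxr : ‖x‖ ^ (2*r) = (‖x‖ ^ r) ^ 2 := by
    rw [mul_comm, Real.rpow_mul (norm_nonneg _), ← Real.rpow_natCast (‖x‖ ^ r) 2]
    norm_num
  rw [hxr]
  simp only [Real.rpow_zero, mul_one, hK, hc₁, e6]
  field_simp
  ring
end

section
/- For the 3-dimensional sliced Laplace kernel: let F(t) = exp(−αt) with α > 0 and f be the one-dimensional basis function satisfying the slicing relation in dimension d = 3. Then for x ∈ ℝ³, x ≠ 0, the variance V(x) = E_{ξ∼U(S²)}[(f(|⟨ξ,x⟩|) − F(‖x‖))²] equals (1/(4α‖x‖)) · (1 − (2α²‖x‖² + 2α‖x‖ + 1) e^{−2α‖x‖}). -/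
open Real MeasureTheory RealInnerProductSpace

open Set Metric

local notation "E3" => EuclideanSpace ℝ (Fin 3)

lemma polar_eq (m : ℕ) (u : E3) :
    ∫ y : E3, |⟪y, u⟫| ^ m * Real.exp (-‖y‖ ^ 2) =
      (∫ ξ : sphere (0 : E3) 1, |⟪(ξ : E3), u⟫| ^ m ∂((volume : Measure E3).toSphere)) *
        ∫ r in Ioi (0 : ℝ), r ^ (m + 2) * Real.exp (-r ^ 2) := by
  have hdim : Module.finrank ℝ E3 = 3 := finrank_euclideanSpace_fin
  have hmp := (volume : Measure E3).measurePreserving_homeomorphUnitSphereProd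
  rw [hdim] at hmp
  set F : sphere (0 : E3) 1 → ℝ := fun ξ => |⟪(ξ : E3), u⟫| ^ m with hF
  set G : Ioi (0 : ℝ) → ℝ := fun r => (r : ℝ) ^ m * Real.exp (-(r : ℝ) ^ 2) with hG
  set g : sphere (0 : E3) 1 × Ioi (0 : ℝ) → ℝ := fun p => F p.1 * G p.2 with hg
  have step1 : ∫ y : E3, |⟪y, u⟫| ^ m * Real.exp (-‖y‖ ^ 2) =
      ∫ y : ({0}ᶜ : Set E3), |⟪(y : E3), u⟫| ^ m * Real.exp (-‖(y : E3)‖ ^ 2)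
        ∂((volume : Measure E3).comap Subtype.val) := by
    rw [integral_subtype_comap (MeasurableSet.singleton _).compl
      (fun y => |⟪y, u⟫| ^ m * Real.exp (-‖y‖ ^ 2)), restrict_compl_singleton]
  have step2 : ∫ y : ({0}ᶜ : Set E3), |⟪(y : E3), u⟫| ^ m * Real.exp (-‖(y : E3)‖ ^ 2)
        ∂((volume : Measure E3).comap Subtype.val) =
      ∫ p, g p ∂(((volume : Measure E3).toSphere).prod (Measure.volumeIoiPow 2)) := by
    rw [← hmp.integral_comp (Homeomorph.measurableEmbedding _) g]
    refine integral_congr_ae (Filter.Eventually.of_forall fun y => ?_)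
    have hy0 : (y : E3) ≠ 0 := y.2
    have hny : ‖(y : E3)‖ ≠ 0 := norm_ne_zero_iff.mpr hy0
    simp only [hg, hF, hG, homeomorphUnitSphereProd_apply_fst_coe,
      homeomorphUnitSphereProd_apply_snd_coe]
    rw [real_inner_smul_left, abs_mul, abs_inv, abs_norm, mul_pow, inv_pow]
    field_simp
  have step3 : ∫ p, g p ∂(((volume : Measure E3).toSphere).prod (Measure.volumeIoiPow 2)) =
      (∫ ξ : sphere (0 : E3) 1, F ξ ∂((volume : Measure E3).toSphere)) *
        ∫ r : Ioi (0 : ℝ), G r ∂(Measure.volumeIoiPow 2) :=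
    integral_prod_mul F G
  have step4 : ∫ r : Ioi (0 : ℝ), G r ∂(Measure.volumeIoiPow 2) = ∫ r in Ioi (0 : ℝ), r ^ (m + 2) * Real.exp (-r ^ 2) := by
    simp only [Measure.volumeIoiPow, ENNReal.ofReal, hG]
    rw [integral_withDensity_eq_integral_smul ((measurable_subtype_coe.pow_const 2).real_toNNReal),
      integral_subtype_comap measurableSet_Ioi
        (fun a => (a ^ 2).toNNReal • (a ^ m * Real.exp (-a ^ 2)))]
    refine setIntegral_congr_fun measurableSet_Ioi fun r hr => ?_
    rw [NNReal.smul_def, Real.coe_toNNReal _ (by positivity), smul_eq_mul]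
    ring
  rw [step1, step2, step3, step4]

lemma oneD_moment (m : ℕ) :
    ∫ t : ℝ, |t| ^ m * Real.exp (-t ^ 2) = Real.Gamma ((m + 1) / 2) := by
  have h1 : ∫ t : ℝ, |t| ^ m * Real.exp (-t ^ 2) =
      ∫ t : ℝ, (fun s => s ^ m * Real.exp (-s ^ 2)) |t| := by
    congr 1; funext t; simp [sq_abs]
  rw [h1, integral_comp_abs (f := fun s => s ^ m * Real.exp (-s ^ 2))]
  have h2 : ∫ x in Ioi (0 : ℝ), x ^ m * Real.exp (-x ^ 2) =
      ∫ x in Ioi (0 : ℝ), x ^ (m : ℝ) * Real.exp (-x ^ (2 : ℝ)) := by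
    refine setIntegral_congr_fun measurableSet_Ioi fun x hx => ?_
    rw [Real.rpow_natCast, show ((2:ℝ)) = ((2:ℕ):ℝ) by norm_num, Real.rpow_natCast]
  rw [h2, integral_rpow_mul_exp_neg_rpow (by norm_num) (lt_of_lt_of_le (by norm_num) (Nat.cast_nonneg m))]
  ring

lemma gauss_eval (m : ℕ) (u : E3) (hu : ‖u‖ = 1) :
    ∫ y : E3, |⟪y, u⟫| ^ m * Real.exp (-‖y‖ ^ 2) = Real.Gamma ((m + 1) / 2) * π := by
  classical
  set u₀ : E3 := EuclideanSpace.single 0 1 with hu₀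
  have hnu₀ : ‖u₀‖ = ‖u‖ := by rw [hu, hu₀, EuclideanSpace.norm_single]; norm_num
  set e : E3 ≃ₗᵢ[ℝ] E3 := Submodule.reflection (ℝ ∙ (u₀ - u))ᗮ with he
  have heu : e u₀ = u := Submodule.reflection_sub hnu₀
  have step1 : ∫ y : E3, |⟪y, u⟫| ^ m * Real.exp (-‖y‖ ^ 2) =
      ∫ y : E3, |⟪y, u₀⟫| ^ m * Real.exp (-‖y‖ ^ 2) := by
    rw [← e.measurePreserving.integral_comp e.toMeasurableEquiv.measurableEmbedding
      (fun y => |⟪y, u⟫| ^ m * Real.exp (-‖y‖ ^ 2))]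
    refine integral_congr_ae (Filter.Eventually.of_forall fun y => ?_)
    simp only [LinearIsometryEquiv.coe_toMeasurableEquiv]
    rw [← heu, e.inner_map_map, e.norm_map]
  have hmp := (EuclideanSpace.volume_preserving_symm_measurableEquiv_toLp (Fin 3)).symm
  have step2 : ∫ y : E3, |⟪y, u₀⟫| ^ m * Real.exp (-‖y‖ ^ 2) =
      ∫ w : Fin 3 → ℝ, |w 0| ^ m * Real.exp (-(w 0 ^ 2 + w 1 ^ 2 + w 2 ^ 2)) := by
    rw [← hmp.integral_comp (MeasurableEquiv.measurableEmbedding _)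
      (fun y : E3 => |⟪y, u₀⟫| ^ m * Real.exp (-‖y‖ ^ 2))]
    refine integral_congr_ae (Filter.Eventually.of_forall fun w => ?_)
    have hcoe : ∀ i, ((MeasurableEquiv.toLp 2 (Fin 3 → ℝ)).symm.symm w) i = w i := fun i => rfl
    have hinner : ⟪(MeasurableEquiv.toLp 2 (Fin 3 → ℝ)).symm.symm w, u₀⟫ = w 0 := by
      rw [hu₀, EuclideanSpace.inner_single_right]
      simp [hcoe]
    have hnorm : ‖(MeasurableEquiv.toLp 2 (Fin 3 → ℝ)).symm.symm w‖ ^ 2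
        = w 0 ^ 2 + w 1 ^ 2 + w 2 ^ 2 := by
      rw [EuclideanSpace.norm_eq]
      rw [Real.sq_sqrt (by positivity)]
      simp [hcoe, Fin.sum_univ_three, sq_abs]
    dsimp only
    rw [hinner, hnorm]
  have step3 : ∫ w : Fin 3 → ℝ, |w 0| ^ m * Real.exp (-(w 0 ^ 2 + w 1 ^ 2 + w 2 ^ 2)) =
      (∫ t : ℝ, |t| ^ m * Real.exp (-t ^ 2)) * (∫ t : ℝ, Real.exp (-t ^ 2)) *
        (∫ t : ℝ, Real.exp (-t ^ 2)) := by
    have := integral_fintype_prod_volume_eq_prod (ι := Fin 3)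
      (f := ![fun t => |t| ^ m * Real.exp (-t ^ 2), fun t => Real.exp (-t ^ 2),
        fun t => Real.exp (-t ^ 2)])
    simp only [Fin.prod_univ_three, Matrix.cons_val_zero, Matrix.cons_val_one, Matrix.head_cons,
      Matrix.cons_val_two, Matrix.tail_cons] at this
    rw [← this]
    refine integral_congr_ae (Filter.Eventually.of_forall fun w => ?_)
    dsimp only
    rw [neg_add, neg_add, Real.exp_add, Real.exp_add]
    ring
  have hgauss : ∫ t : ℝ, Real.exp (-t ^ 2) = Real.sqrt π := by
    have := integral_gaussian 1
    simpa using this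
  rw [step1, step2, step3, oneD_moment, hgauss, mul_assoc,
    Real.mul_self_sqrt Real.pi_pos.le]

lemma Ioi_moment (k : ℕ) : ∫ x in Ioi (0:ℝ), x ^ k * Real.exp (-x ^ 2)
    = (1 / 2) * Real.Gamma (((k : ℝ) + 1) / 2) := by
  have h2 : ∫ x in Ioi (0 : ℝ), x ^ k * Real.exp (-x ^ 2) =
      ∫ x in Ioi (0 : ℝ), x ^ (k : ℝ) * Real.exp (-x ^ (2 : ℝ)) := by
    refine setIntegral_congr_fun measurableSet_Ioi fun x hx => ?_
    rw [Real.rpow_natCast, show ((2:ℝ)) = ((2:ℕ):ℝ) by norm_num, Real.rpow_natCast]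
  rw [h2, integral_rpow_mul_exp_neg_rpow (by norm_num)
    (lt_of_lt_of_le (by norm_num) (Nat.cast_nonneg k))]

lemma sphere_moment_raw (m : ℕ) (u : E3) (hu : ‖u‖ = 1) :
    ∫ ξ : sphere (0 : E3) 1, |⟪(ξ : E3), u⟫| ^ m ∂((volume : Measure E3).toSphere)
      = 4 * π / ((m : ℝ) + 1) := by
  set S := ∫ ξ : sphere (0 : E3) 1, |⟪(ξ : E3), u⟫| ^ m ∂((volume : Measure E3).toSphere) with hS
  set x : ℝ := ((m : ℝ) + 1) / 2 with hx
  have hxpos : 0 < x := by positivity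
  have hΓ : 0 < Real.Gamma x := Real.Gamma_pos_of_pos hxpos
  have h := (gauss_eval m u hu).symm.trans (polar_eq m u)
  rw [Ioi_moment (m + 2)] at h
  have harg : ((m + 2 : ℕ) : ℝ) + 1 = 2 * (x + 1) := by push_cast; rw [hx]; ring
  rw [harg, show (2 * (x + 1)) / 2 = x + 1 by ring, Real.Gamma_add_one hxpos.ne'] at h
  have hGam : Real.Gamma ((m + 1) / 2) = Real.Gamma x := by norm_num [hx]
  rw [hGam] at h
  have hm1 : ((m : ℝ) + 1) ≠ 0 := by positivity
  rw [eq_div_iff hm1]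
  have hcancel : Real.Gamma x * π = S * (1 / 2 * (x * Real.Gamma x)) := h
  have : (S * ((m : ℝ) + 1)) * Real.Gamma x = (4 * π) * Real.Gamma x := by
    rw [hx] at hcancel ⊢; nlinarith [hcancel]
  exact mul_right_cancel₀ hΓ.ne' this

lemma toSphere_univ_toReal :
    (((volume : Measure E3).toSphere) univ).toReal = 4 * π := by
  have hu : ‖(EuclideanSpace.single (0 : Fin 3) (1:ℝ) : E3)‖ = 1 := by
    rw [EuclideanSpace.norm_single]; norm_num
  have h := sphere_moment_raw 0 _ hu
  simpa [integral_const, Measure.real] using h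

lemma toSphere_univ_ne_zero : ((volume : Measure E3).toSphere) univ ≠ 0 := by
  intro h
  have := toSphere_univ_toReal
  rw [h] at this
  simp at this

instance : IsProbabilityMeasure (uniformSphere 3) := by
  constructor
  rw [uniformSphere, Measure.smul_apply, smul_eq_mul]
  exact ENNReal.inv_mul_cancel toSphere_univ_ne_zero (measure_ne_top _ _)

lemma uniform_moment (m : ℕ) (u : E3) (hu : ‖u‖ = 1) :
    ∫ ξ : sphere (0 : E3) 1, |⟪(ξ : E3), u⟫| ^ m ∂(uniformSphere 3)
      = 1 / ((m : ℝ) + 1) := by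
  rw [uniformSphere, integral_smul_measure, sphere_moment_raw m u hu, ENNReal.toReal_inv,
    toSphere_univ_toReal, smul_eq_mul]
  have : (4 : ℝ) * π ≠ 0 := by positivity
  field_simp

-- pointwise exponential series
lemma exp_series_eq (j : ℕ) (β t : ℝ) :
    ∑' k : ℕ, β ^ k / (k.factorial : ℝ) * t ^ (j + k) = t ^ j * Real.exp (β * t) := by
  have h1 : ∀ k : ℕ, β ^ k / (k.factorial : ℝ) * t ^ (j + k)
      = t ^ j * ((β * t) ^ k / (k.factorial : ℝ)) := by
    intro k; rw [pow_add, mul_pow]; ring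
  rw [tsum_congr h1, tsum_mul_left]
  congr 1
  rw [Real.exp_eq_exp_ℝ, NormedSpace.exp_eq_tsum_div]

lemma summable_aux (c : ℝ) (f : ℕ → ℝ) (hf0 : ∀ k, 0 ≤ f k)
    (hf : ∀ k, f k ≤ |c| ^ k / (k.factorial : ℝ)) : Summable f :=
  Summable.of_nonneg_of_le hf0 hf (Real.summable_pow_div_factorial |c|)

lemma sphere_exp_moment (j : ℕ) (β : ℝ) (u : E3) (hu : ‖u‖ = 1) :
    ∫ ξ : sphere (0 : E3) 1, |⟪(ξ : E3), u⟫| ^ j * Real.exp (β * |⟪(ξ : E3), u⟫|)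
        ∂(uniformSphere 3)
      = ∑' k : ℕ, β ^ k / ((k.factorial : ℝ) * ((j : ℝ) + k + 1)) := by
  set μ := uniformSphere 3
  set F : ℕ → (sphere (0 : E3) 1) → ℝ :=
    fun k ξ => β ^ k / (k.factorial : ℝ) * |⟪(ξ : E3), u⟫| ^ (j + k) with hF
  have hip : ∀ ξ : sphere (0 : E3) 1, |⟪(ξ : E3), u⟫| ≤ 1 := by
    intro ξ
    have := abs_real_inner_le_norm (ξ : E3) u
    rwa [hu, mem_sphere_zero_iff_norm.mp ξ.2, one_mul] at this
  have hcont : ∀ k, Continuous (F k) := by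
    intro k
    rw [hF]
    have : Continuous fun ξ : sphere (0 : E3) 1 => ⟪(ξ : E3), u⟫ :=
      Continuous.inner continuous_subtype_val continuous_const
    fun_prop
  have hint : ∀ k, Integrable (F k) μ := fun k =>
    (hcont k).integrable_of_hasCompactSupport (HasCompactSupport.of_compactSpace _)
  have hmom : ∀ m : ℕ, ∫ ξ : sphere (0 : E3) 1, |⟪(ξ : E3), u⟫| ^ m ∂μ = 1 / ((m : ℝ) + 1) :=
    fun m => uniform_moment m u hu
  have hval : ∀ k, ∫ ξ, F k ξ ∂μ = β ^ k / ((k.factorial : ℝ) * ((j : ℝ) + k + 1)) := by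
    intro k
    rw [hF]
    simp only
    rw [integral_const_mul, hmom (j + k)]
    push_cast
    field_simp
  have hnorm : ∀ k, ∫ ξ, ‖F k ξ‖ ∂μ ≤ |β| ^ k / (k.factorial : ℝ) := by
    intro k
    have hb : ∀ ξ : sphere (0 : E3) 1, ‖F k ξ‖ ≤ |β| ^ k / (k.factorial : ℝ) := by
      intro ξ
      rw [hF]
      simp only [Real.norm_eq_abs, abs_mul, abs_div, abs_pow, abs_abs,
        Nat.abs_cast]
      have h1 : |⟪(ξ : E3), u⟫| ^ (j + k) ≤ 1 :=
        pow_le_one₀ (abs_nonneg _) (hip ξ)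
      calc |β| ^ k / (k.factorial : ℝ) * |⟪(ξ : E3), u⟫| ^ (j + k)
          ≤ |β| ^ k / (k.factorial : ℝ) * 1 := by
            apply mul_le_mul_of_nonneg_left h1 (by positivity)
        _ = |β| ^ k / (k.factorial : ℝ) := mul_one _
    calc ∫ ξ, ‖F k ξ‖ ∂μ ≤ ∫ _ξ, |β| ^ k / (k.factorial : ℝ) ∂μ := by
          refine integral_mono (hint k).norm (integrable_const _) hb
      _ = |β| ^ k / (k.factorial : ℝ) := by simp
  have hsum : Summable fun k => ∫ ξ, ‖F k ξ‖ ∂μ :=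
    summable_aux β _ (fun k => integral_nonneg fun ξ => norm_nonneg _) hnorm
  have hswap := integral_tsum_of_summable_integral_norm hint hsum
  have hpt : ∀ ξ : sphere (0 : E3) 1, ∑' k, F k ξ
      = |⟪(ξ : E3), u⟫| ^ j * Real.exp (β * |⟪(ξ : E3), u⟫|) := fun ξ => exp_series_eq j β _
  calc ∫ ξ : sphere (0 : E3) 1, |⟪(ξ : E3), u⟫| ^ j * Real.exp (β * |⟪(ξ : E3), u⟫|) ∂μ
      = ∫ ξ, ∑' k, F k ξ ∂μ :=
        integral_congr_ae (Filter.Eventually.of_forall fun ξ => (hpt ξ).symm)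
    _ = ∑' k, ∫ ξ, F k ξ ∂μ := hswap.symm
    _ = ∑' k : ℕ, β ^ k / ((k.factorial : ℝ) * ((j : ℝ) + k + 1)) := tsum_congr hval

lemma interval_exp_moment (j : ℕ) (β : ℝ) :
    ∫ t in (0:ℝ)..1, t ^ j * Real.exp (β * t)
      = ∑' k : ℕ, β ^ k / ((k.factorial : ℝ) * ((j : ℝ) + k + 1)) := by
  rw [intervalIntegral.integral_of_le zero_le_one]
  set μ := (volume : Measure ℝ).restrict (Ioc (0:ℝ) 1)
  have hμuniv : μ univ = 1 := by
    simp [μ, Measure.restrict_apply_univ]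
  set F : ℕ → ℝ → ℝ := fun k t => β ^ k / (k.factorial : ℝ) * t ^ (j + k) with hF
  have hint : ∀ k, Integrable (F k) μ := by
    intro k
    exact Continuous.integrableOn_Ioc (by rw [hF]; fun_prop)
  have hval : ∀ k, ∫ t, F k t ∂μ = β ^ k / ((k.factorial : ℝ) * ((j : ℝ) + k + 1)) := by
    intro k
    rw [hF]
    simp only
    rw [integral_const_mul, ← intervalIntegral.integral_of_le zero_le_one,
      integral_pow]
    push_cast
    field_simp
    simp
  have hnorm : ∀ k, ∫ t, ‖F k t‖ ∂μ ≤ |β| ^ k / (k.factorial : ℝ) := by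
    intro k
    have hb : ∀ t ∈ Ioc (0:ℝ) 1, ‖F k t‖ ≤ |β| ^ k / (k.factorial : ℝ) := by
      intro t ht
      rw [hF]
      simp only [Real.norm_eq_abs, abs_mul, abs_div, abs_pow, Nat.abs_cast]
      have h1 : |t| ^ (j + k) ≤ 1 :=
        pow_le_one₀ (abs_nonneg _) (abs_le.mpr ⟨by linarith [ht.1], ht.2⟩)
      calc |β| ^ k / (k.factorial : ℝ) * |t| ^ (j + k)
          ≤ |β| ^ k / (k.factorial : ℝ) * 1 :=
            mul_le_mul_of_nonneg_left h1 (by positivity)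
        _ = |β| ^ k / (k.factorial : ℝ) := mul_one _
    calc ∫ t, ‖F k t‖ ∂μ ≤ ∫ _t, |β| ^ k / (k.factorial : ℝ) ∂μ := by
          refine integral_mono_ae (hint k).norm (integrable_const _) ?_
          filter_upwards [ae_restrict_mem measurableSet_Ioc] with t ht using hb t ht
      _ = |β| ^ k / (k.factorial : ℝ) := by simp [hμuniv, Measure.real]
  have hsum : Summable fun k => ∫ t, ‖F k t‖ ∂μ :=
    summable_aux β _ (fun k => integral_nonneg fun t => norm_nonneg _) hnorm
  have hswap := integral_tsum_of_summable_integral_norm hint hsum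
  calc ∫ t, t ^ j * Real.exp (β * t) ∂μ
      = ∫ t in Ioc (0:ℝ) 1, t ^ j * Real.exp (β * t) := rfl
    _ = ∫ t in Ioc (0:ℝ) 1, ∑' k, F k t := by
        refine setIntegral_congr_fun measurableSet_Ioc fun t ht => ?_
        exact (exp_series_eq j β t).symm
    _ = ∑' k : ℕ, β ^ k / ((k.factorial : ℝ) * ((j : ℝ) + k + 1)) := by
        rw [← hswap]
        exact tsum_congr hval

lemma f_eq (α : ℝ) (f : ℝ → ℝ)
    (hf : ∀ t : ℝ, f t = ∑' n : ℕ, ((n : ℝ) + 1) * (-(α * t)) ^ n / n.factorial) :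
    ∀ t : ℝ, f t = (1 - α * t) * Real.exp (-(α * t)) := by
  intro t
  set x : ℝ := -(α * t) with hx
  have hexp : Real.exp x = ∑' n : ℕ, x ^ n / n.factorial := by
    rw [Real.exp_eq_exp_ℝ, NormedSpace.exp_eq_tsum_div]
  have s1 : Summable (fun n : ℕ => x ^ n / (n.factorial : ℝ)) :=
    Real.summable_pow_div_factorial x
  have hb1 : (fun n : ℕ => ((n + 1 : ℕ) : ℝ) * x ^ (n + 1) / ((n + 1).factorial : ℝ))
      = fun n : ℕ => x * (x ^ n / (n.factorial : ℝ)) := by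
    funext n
    rw [Nat.factorial_succ, pow_succ]
    push_cast
    have hfac : ((n.factorial : ℝ)) ≠ 0 := by positivity
    field_simp
  have sb : Summable (fun n : ℕ => (n : ℝ) * x ^ n / (n.factorial : ℝ)) := by
    rw [← summable_nat_add_iff 1, hb1]
    exact s1.mul_left x
  have hbsum : ∑' n : ℕ, (n : ℝ) * x ^ n / (n.factorial : ℝ) = x * Real.exp x := by
    rw [sb.tsum_eq_zero_add]
    simp only [Nat.cast_zero, zero_mul, zero_div, zero_add]
    rw [hb1, tsum_mul_left, hexp]
  have hsplit : ∀ n : ℕ, ((n : ℝ) + 1) * x ^ n / (n.factorial : ℝ)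
      = x ^ n / (n.factorial : ℝ) + (n : ℝ) * x ^ n / (n.factorial : ℝ) := by
    intro n; ring
  rw [hf t, tsum_congr hsplit, s1.tsum_add sb, hbsum, ← hexp]
  rw [hx]
  ring

lemma K0 (β : ℝ) (hβ : β ≠ 0) :
    ∫ t in (0:ℝ)..1, t ^ 0 * Real.exp (β * t) = (Real.exp β - 1) / β := by
  have hderiv : ∀ t ∈ Set.uIcc (0:ℝ) 1,
      HasDerivAt (fun t => Real.exp (β * t) / β) (t ^ 0 * Real.exp (β * t)) t := by
    intro t _
    have h1 : HasDerivAt (fun t : ℝ => β * t) β t := by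
      simpa using (hasDerivAt_id t).const_mul β
    have h2 := (Real.hasDerivAt_exp (β * t)).comp t h1
    have h3 := h2.div_const β
    refine h3.congr_deriv ?_
    rw [div_eq_iff hβ]; ring
  rw [intervalIntegral.integral_eq_sub_of_hasDerivAt hderiv (Continuous.intervalIntegrable (by fun_prop) _ _)]
  simp only [mul_one, mul_zero, Real.exp_zero]
  field_simp

lemma K1 (β : ℝ) (hβ : β ≠ 0) :
    ∫ t in (0:ℝ)..1, t ^ 1 * Real.exp (β * t)
      = ((β - 1) * Real.exp β + 1) / β ^ 2 := by
  have hderiv : ∀ t ∈ Set.uIcc (0:ℝ) 1,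
      HasDerivAt (fun t => (β * t - 1) * Real.exp (β * t) / β ^ 2)
        (t ^ 1 * Real.exp (β * t)) t := by
    intro t _
    have h1 : HasDerivAt (fun t : ℝ => β * t - 1) β t := by
      simpa using ((hasDerivAt_id t).const_mul β).sub_const 1
    have h2 := (Real.hasDerivAt_exp (β * t)).comp t
      (by simpa using (hasDerivAt_id t).const_mul β)
    have h3 := (h1.mul h2).div_const (β ^ 2)
    refine h3.congr_deriv ?_
    rw [div_eq_iff (pow_ne_zero 2 hβ)]; simp only [Function.comp_apply]; ring
  rw [intervalIntegral.integral_eq_sub_of_hasDerivAt hderiv (Continuous.intervalIntegrable (by fun_prop) _ _)]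
  field_simp
  simp only [mul_zero, Real.exp_zero]; ring

lemma K2 (β : ℝ) (hβ : β ≠ 0) :
    ∫ t in (0:ℝ)..1, t ^ 2 * Real.exp (β * t)
      = ((β ^ 2 - 2 * β + 2) * Real.exp β - 2) / β ^ 3 := by
  have hderiv : ∀ t ∈ Set.uIcc (0:ℝ) 1,
      HasDerivAt (fun t => (β ^ 2 * t ^ 2 - 2 * β * t + 2) * Real.exp (β * t) / β ^ 3)
        (t ^ 2 * Real.exp (β * t)) t := by
    intro t _
    have h1 : HasDerivAt (fun t : ℝ => β ^ 2 * t ^ 2 - 2 * β * t + 2)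
        (β ^ 2 * (2 * t) - 2 * β) t := by
      have := (((hasDerivAt_pow 2 t).const_mul (β ^ 2)).sub
        ((hasDerivAt_id t).const_mul (2 * β))).add_const 2
      simpa using this
    have h2 := (Real.hasDerivAt_exp (β * t)).comp t
      (by simpa using (hasDerivAt_id t).const_mul β)
    have h3 := (h1.mul h2).div_const (β ^ 3)
    refine h3.congr_deriv ?_
    rw [div_eq_iff (pow_ne_zero 3 hβ)]; simp only [Function.comp_apply]; ring
  rw [intervalIntegral.integral_eq_sub_of_hasDerivAt hderiv (Continuous.intervalIntegrable (by fun_prop) _ _)]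
  field_simp
  simp only [mul_zero, zero_mul, Real.exp_zero]; ring

lemma final_algebra (s : ℝ) (hs : 0 < s) :
    (Real.exp (-2 * s) - 1) / (-2 * s)
      - 2 * s * (((-2 * s - 1) * Real.exp (-2 * s) + 1) / (-2 * s) ^ 2)
      + s ^ 2 * ((((-2 * s) ^ 2 - 2 * (-2 * s) + 2) * Real.exp (-2 * s) - 2) / (-2 * s) ^ 3)
      - 2 * Real.exp (-s) * ((Real.exp (-s) - 1) / (-s))
      + 2 * Real.exp (-s) * s * (((-s - 1) * Real.exp (-s) + 1) / (-s) ^ 2)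
      + Real.exp (-s) ^ 2
      = 1 / (4 * s) * (1 - (2 * s ^ 2 + 2 * s + 1) * Real.exp (-2 * s)) := by
  have h2 : Real.exp (-2 * s) = Real.exp (-s) ^ 2 := by
    rw [← Real.exp_nat_mul]; norm_num
  rw [h2]
  have hs' : s ≠ 0 := hs.ne'
  rw [show ((-2*s)^2 : ℝ) = 4*s^2 by ring, show ((-2*s)^3 : ℝ) = -(8*s^3) by ring,
    show ((-s)^2 : ℝ) = s^2 by ring, show ((-2*s) : ℝ) = -(2*s) by ring, div_neg, div_neg,
    show ((-s) : ℝ) = -(s) by ring, div_neg]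
  field_simp
  ring

lemma pointwise_expand (s c t : ℝ) :
    ((1 - s * t) * Real.exp (-(s * t)) - c) ^ 2
      = t ^ 0 * Real.exp ((-2 * s) * t) - 2 * s * (t ^ 1 * Real.exp ((-2 * s) * t))
        + s ^ 2 * (t ^ 2 * Real.exp ((-2 * s) * t)) - 2 * c * (t ^ 0 * Real.exp ((-s) * t))
        + 2 * c * s * (t ^ 1 * Real.exp ((-s) * t)) + c ^ 2 := by
  have h1 : Real.exp ((-2 * s) * t) = Real.exp (-(s * t)) * Real.exp (-(s * t)) := by
    rw [← Real.exp_add]; congr 1; ring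
  have h2 : Real.exp ((-s) * t) = Real.exp (-(s * t)) := by congr 1; ring
  rw [h1, h2]; ring

theorem variance_laplace_kernel_dim3 (α : ℝ) (hα : 0 < α) (f : ℝ → ℝ)
    (hf : ∀ t : ℝ, f t = ∑' n : ℕ, ((n : ℝ) + 1) * (-(α * t)) ^ n / n.factorial)
    (x : EuclideanSpace ℝ (Fin 3)) (hx : x ≠ 0) :
    ∫ ξ : Metric.sphere (0 : EuclideanSpace ℝ (Fin 3)) 1,
        (f |⟪(ξ : EuclideanSpace ℝ (Fin 3)), x⟫| - Real.exp (-(α * ‖x‖))) ^ 2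
          ∂(uniformSphere 3) =
      1 / (4 * α * ‖x‖) *
        (1 - (2 * α ^ 2 * ‖x‖ ^ 2 + 2 * α * ‖x‖ + 1) * Real.exp (-(2 * α * ‖x‖))) := by
  set R : ℝ := ‖x‖ with hRdef
  have hR : 0 < R := norm_pos_iff.mpr hx
  set u : E3 := R⁻¹ • x with hudef
  have hu : ‖u‖ = 1 := by
    rw [hudef, norm_smul, norm_inv, norm_norm, ← hRdef, inv_mul_cancel₀ hR.ne']
  have hxu : x = R • u := by rw [hudef, smul_inv_smul₀ hR.ne']
  set s : ℝ := α * R with hsdef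
  have hs : 0 < s := mul_pos hα hR
  set c : ℝ := Real.exp (-s) with hcdef
  set tv : sphere (0 : E3) 1 → ℝ := fun ξ => |⟪(ξ : E3), u⟫| with htv
  have hptwise : ∀ ξ : sphere (0 : E3) 1,
      (f |⟪(ξ : E3), x⟫| - Real.exp (-(α * ‖x‖))) ^ 2
        = tv ξ ^ 0 * Real.exp ((-2 * s) * tv ξ) - 2 * s * (tv ξ ^ 1 * Real.exp ((-2 * s) * tv ξ))
          + s ^ 2 * (tv ξ ^ 2 * Real.exp ((-2 * s) * tv ξ))
          - 2 * c * (tv ξ ^ 0 * Real.exp ((-s) * tv ξ))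
          + 2 * c * s * (tv ξ ^ 1 * Real.exp ((-s) * tv ξ)) + c ^ 2 := by
    intro ξ
    have hinner : |⟪(ξ : E3), x⟫| = R * tv ξ := by
      rw [hxu, real_inner_smul_right, abs_mul, abs_of_pos hR]
    have hfval : f |⟪(ξ : E3), x⟫| = (1 - s * tv ξ) * Real.exp (-(s * tv ξ)) := by
      rw [f_eq α f hf, hinner]
      have : α * (R * tv ξ) = s * tv ξ := by rw [hsdef]; ring
      rw [this]
    have hc' : Real.exp (-(α * ‖x‖)) = c := by rw [hcdef, hsdef, hRdef]
    rw [hfval, hc', ← pointwise_expand]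
  rw [integral_congr_ae (Filter.Eventually.of_forall hptwise)]
  -- integrability of the pieces
  have hcontp : ∀ (j : ℕ) (β : ℝ), Continuous (fun ξ : sphere (0 : E3) 1 =>
      tv ξ ^ j * Real.exp (β * tv ξ)) := by
    intro j β
    have h0 : Continuous fun ξ : sphere (0 : E3) 1 => ⟪(ξ : E3), u⟫ :=
      Continuous.inner continuous_subtype_val continuous_const
    rw [htv]
    fun_prop
  have hip : ∀ (j : ℕ) (β : ℝ), Integrable (fun ξ : sphere (0 : E3) 1 =>
      tv ξ ^ j * Real.exp (β * tv ξ)) (uniformSphere 3) := fun j β =>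
    (hcontp j β).integrable_of_hasCompactSupport (HasCompactSupport.of_compactSpace _)
  have key : ∀ (j : ℕ) (β : ℝ), ∫ ξ : sphere (0 : E3) 1,
      tv ξ ^ j * Real.exp (β * tv ξ) ∂(uniformSphere 3)
        = ∫ t in (0:ℝ)..1, t ^ j * Real.exp (β * t) := by
    intro j β
    rw [htv]
    exact (sphere_exp_moment j β u hu).trans (interval_exp_moment j β).symm
  have hL1 : Integrable (fun a : sphere (0 : E3) 1 =>
      tv a ^ 0 * Real.exp (-2 * s * tv a) - 2 * s * (tv a ^ 1 * Real.exp (-2 * s * tv a)))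
      (uniformSphere 3) := (hip 0 (-2*s)).sub ((hip 1 (-2*s)).const_mul (2*s))
  have hL2 : Integrable (fun a : sphere (0 : E3) 1 =>
      tv a ^ 0 * Real.exp (-2 * s * tv a) - 2 * s * (tv a ^ 1 * Real.exp (-2 * s * tv a))
        + s ^ 2 * (tv a ^ 2 * Real.exp (-2 * s * tv a)))
      (uniformSphere 3) := hL1.add ((hip 2 (-2*s)).const_mul (s^2))
  have hL3 : Integrable (fun a : sphere (0 : E3) 1 =>
      tv a ^ 0 * Real.exp (-2 * s * tv a) - 2 * s * (tv a ^ 1 * Real.exp (-2 * s * tv a))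
        + s ^ 2 * (tv a ^ 2 * Real.exp (-2 * s * tv a))
        - 2 * c * (tv a ^ 0 * Real.exp (-s * tv a)))
      (uniformSphere 3) := hL2.sub ((hip 0 (-s)).const_mul (2*c))
  have hL4 : Integrable (fun a : sphere (0 : E3) 1 =>
      tv a ^ 0 * Real.exp (-2 * s * tv a) - 2 * s * (tv a ^ 1 * Real.exp (-2 * s * tv a))
        + s ^ 2 * (tv a ^ 2 * Real.exp (-2 * s * tv a))
        - 2 * c * (tv a ^ 0 * Real.exp (-s * tv a))
        + 2 * c * s * (tv a ^ 1 * Real.exp (-s * tv a)))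
      (uniformSphere 3) := hL3.add ((hip 1 (-s)).const_mul (2*c*s))
  rw [integral_add hL4 (integrable_const _),
    integral_add hL3 ((hip 1 (-s)).const_mul (2*c*s)),
    integral_sub hL2 ((hip 0 (-s)).const_mul (2*c)),
    integral_add hL1 ((hip 2 (-2*s)).const_mul (s^2)),
    integral_sub (hip 0 (-2*s)) ((hip 1 (-2*s)).const_mul (2*s)),
    integral_const_mul, integral_const_mul, integral_const_mul, integral_const_mul,
    integral_const, probReal_univ, one_smul,
    key 0 (-2*s), key 1 (-2*s), key 2 (-2*s), key 0 (-s), key 1 (-s),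
    K0 _ (by nlinarith), K1 _ (by nlinarith), K2 _ (by nlinarith),
    K0 _ (by nlinarith), K1 _ (by nlinarith)]
  have hfin := final_algebra s hs
  rw [hcdef]
  have hgoalRHS : 1 / (4 * α * ‖x‖) *
      (1 - (2 * α ^ 2 * ‖x‖ ^ 2 + 2 * α * ‖x‖ + 1) * Real.exp (-(2 * α * ‖x‖)))
      = 1 / (4 * s) * (1 - (2 * s ^ 2 + 2 * s + 1) * Real.exp (-2 * s)) := by
    rw [hsdef, hRdef]
    have : -(2 * α * ‖x‖) = -2 * (α * ‖x‖) := by ring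
    rw [this]
    ring_nf
  rw [hgoalRHS]
  exact hfin
end

section
/- The power series identity: Σ_{n=0}^∞ Σ_{k=0}^n (k(n−k)/(n+1)) · (1/(k!(n−k)!)) · (−t)^n = (e^{−2t}/(4t)) · (e^{2t} − (2t² + 2t + 1)) for all t > 0. -/
lemma exp_tsum (x : ℝ) : ∑' n : ℕ, x ^ n / (n.factorial : ℝ) = Real.exp x := by
  rw [Real.exp_eq_exp_ℝ, NormedSpace.exp_eq_tsum_div]

lemma sum_inv_fact (m : ℕ) :
    ∑ j ∈ Finset.range (m + 1), (1:ℝ) / ((j.factorial : ℝ) * ((m - j).factorial : ℝ))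
      = 2 ^ m / (m.factorial : ℝ) := by
  have h : ∀ j ∈ Finset.range (m+1), (1:ℝ) / ((j.factorial : ℝ) * ((m - j).factorial : ℝ))
      = (m.choose j : ℝ) / (m.factorial : ℝ) := by
    intro j hj
    have hj' : j ≤ m := Nat.lt_succ_iff.mp (Finset.mem_range.mp hj)
    have key : (m.choose j : ℝ) * (j.factorial : ℝ) * ((m - j).factorial : ℝ) = (m.factorial : ℝ) := by
      exact_mod_cast congrArg (Nat.cast : ℕ → ℝ) (Nat.choose_mul_factorial_mul_factorial hj')
    have h1 : (j.factorial : ℝ) ≠ 0 := Nat.cast_ne_zero.mpr j.factorial_ne_zero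
    have h2 : ((m - j).factorial : ℝ) ≠ 0 := Nat.cast_ne_zero.mpr (m - j).factorial_ne_zero
    have h3 : (m.factorial : ℝ) ≠ 0 := Nat.cast_ne_zero.mpr m.factorial_ne_zero
    field_simp
    linarith [key]
  rw [Finset.sum_congr rfl h, ← Finset.sum_div, ← Nat.cast_sum, Nat.sum_range_choose]
  push_cast
  ring


lemma lv_inner_sum (n : ℕ) :
    ∑ k ∈ Finset.range (n + 1),
        ((k : ℝ) * ((n : ℝ) - k)) * (1 / ((k.factorial : ℝ) * ((n - k).factorial : ℝ)))
      = (n:ℝ) * ((n:ℝ) - 1) * 2 ^ n / (4 * (n.factorial : ℝ)) := by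
  match n with
  | 0 => simp
  | 1 => norm_num [Finset.sum_range_succ]
  | (m+2) =>
    rw [Finset.sum_range_succ, Finset.sum_range_succ']
    have h0 : ((0:ℕ) : ℝ) * (((m+2:ℕ):ℝ) - (0:ℕ)) * (1 / (((0:ℕ).factorial : ℝ) * (((m+2) - 0).factorial : ℝ))) = 0 := by
      simp
    have hlast : (((m+2:ℕ)) : ℝ) * (((m+2:ℕ):ℝ) - ((m+2:ℕ):ℝ)) *
        (1 / ((((m+2):ℕ).factorial : ℝ) * ((((m+2)) - (m+2)).factorial : ℝ))) = 0 := by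
      simp
    have hmid : ∀ i ∈ Finset.range (m+1),
        (((i+1:ℕ)) : ℝ) * (((m+2:ℕ):ℝ) - ((i+1:ℕ):ℝ)) *
          (1 / ((((i+1):ℕ).factorial : ℝ) * ((((m+2)) - (i+1)).factorial : ℝ)))
        = (1:ℝ) / ((i.factorial : ℝ) * ((m - i).factorial : ℝ)) := by
      intro i hi
      have hi' : i ≤ m := Nat.lt_succ_iff.mp (Finset.mem_range.mp hi)
      have e1 : m + 2 - (i+1) = (m - i) + 1 := by omega
      rw [e1, Nat.factorial_succ, Nat.factorial_succ]
      have hc : ((m - i : ℕ) : ℝ) = (m : ℝ) - (i : ℝ) := by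
        exact Nat.cast_sub hi'
      have h1 : (i.factorial : ℝ) ≠ 0 := Nat.cast_ne_zero.mpr i.factorial_ne_zero
      have h2 : ((m - i).factorial : ℝ) ≠ 0 := Nat.cast_ne_zero.mpr (m - i).factorial_ne_zero
      push_cast [hc]
      have h3 : (i:ℝ) + 1 ≠ 0 := by positivity
      have h4 : (m:ℝ) - i + 1 ≠ 0 := by
        have : (i:ℝ) ≤ m := by exact_mod_cast hi'
        linarith
      field_simp
      ring
    rw [Finset.sum_congr rfl hmid, sum_inv_fact, h0, hlast]
    rw [Nat.factorial_succ, Nat.factorial_succ]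
    have h3 : (m.factorial : ℝ) ≠ 0 := Nat.cast_ne_zero.mpr m.factorial_ne_zero
    push_cast
    field_simp
    ring

lemma lv_summable_n (x : ℝ) : Summable (fun n : ℕ => (n:ℝ) * x ^ n / (n.factorial : ℝ)) := by
  rw [← summable_nat_add_iff 1]
  have h : (fun n : ℕ => ((n+1:ℕ):ℝ) * x ^ (n+1) / (((n+1).factorial : ℝ)))
      = fun n : ℕ => x * (x ^ n / (n.factorial : ℝ)) := by
    funext n
    rw [Nat.factorial_succ]
    have h1 : (n.factorial : ℝ) ≠ 0 := Nat.cast_ne_zero.mpr n.factorial_ne_zero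
    have h3 : (n:ℝ) + 1 ≠ 0 := by positivity
    push_cast
    field_simp
    ring
  rw [h]
  exact (Real.summable_pow_div_factorial x).mul_left x

lemma lv_tsum_n (x : ℝ) : ∑' n : ℕ, (n:ℝ) * x ^ n / (n.factorial : ℝ) = x * Real.exp x := by
  rw [Summable.tsum_eq_zero_add (lv_summable_n x)]
  have h : ∀ n : ℕ, ((n+1:ℕ):ℝ) * x ^ (n+1) / (((n+1).factorial : ℝ))
      = x * (x ^ n / (n.factorial : ℝ)) := by
    intro n
    rw [Nat.factorial_succ]
    have h1 : (n.factorial : ℝ) ≠ 0 := Nat.cast_ne_zero.mpr n.factorial_ne_zero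
    have h3 : (n:ℝ) + 1 ≠ 0 := by positivity
    push_cast
    field_simp
    ring
  rw [tsum_congr h, tsum_mul_left, exp_tsum]
  simp

lemma lv_summable_nn (x : ℝ) :
    Summable (fun n : ℕ => (n:ℝ) * ((n:ℝ) - 1) * x ^ n / (n.factorial : ℝ)) := by
  rw [← summable_nat_add_iff 1]
  have h : (fun n : ℕ => ((n+1:ℕ):ℝ) * (((n+1:ℕ):ℝ) - 1) * x ^ (n+1) / (((n+1).factorial : ℝ)))
      = fun n : ℕ => x * ((n:ℝ) * x ^ n / (n.factorial : ℝ)) := by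
    funext n
    rw [Nat.factorial_succ]
    have h1 : (n.factorial : ℝ) ≠ 0 := Nat.cast_ne_zero.mpr n.factorial_ne_zero
    have h3 : (n:ℝ) + 1 ≠ 0 := by positivity
    push_cast
    field_simp
    ring
  rw [h]
  exact (lv_summable_n x).mul_left x

lemma lv_tsum_nn (x : ℝ) :
    ∑' n : ℕ, (n:ℝ) * ((n:ℝ) - 1) * x ^ n / (n.factorial : ℝ) = x ^ 2 * Real.exp x := by
  rw [Summable.tsum_eq_zero_add (lv_summable_nn x)]
  have h : ∀ n : ℕ, ((n+1:ℕ):ℝ) * (((n+1:ℕ):ℝ) - 1) * x ^ (n+1) / (((n+1).factorial : ℝ))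
      = x * ((n:ℝ) * x ^ n / (n.factorial : ℝ)) := by
    intro n
    rw [Nat.factorial_succ]
    have h1 : (n.factorial : ℝ) ≠ 0 := Nat.cast_ne_zero.mpr n.factorial_ne_zero
    have h3 : (n:ℝ) + 1 ≠ 0 := by positivity
    push_cast
    field_simp
    ring
  rw [tsum_congr h, tsum_mul_left, lv_tsum_n]
  simp
  ring


lemma lv_B_eq (x : ℝ) :
    (fun m : ℕ => ((m:ℝ) - 1) * ((m:ℝ) - 2) * x ^ m / (m.factorial : ℝ))
      = fun m : ℕ => ((m:ℝ) * ((m:ℝ) - 1) * x ^ m / (m.factorial : ℝ)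
          - 2 * ((m:ℝ) * x ^ m / (m.factorial : ℝ))) + 2 * (x ^ m / (m.factorial : ℝ)) := by
  funext m
  have h1 : (m.factorial : ℝ) ≠ 0 := Nat.cast_ne_zero.mpr m.factorial_ne_zero
  field_simp
  ring

lemma lv_summable_B (x : ℝ) :
    Summable (fun m : ℕ => ((m:ℝ) - 1) * ((m:ℝ) - 2) * x ^ m / (m.factorial : ℝ)) := by
  rw [lv_B_eq]
  exact ((lv_summable_nn x).sub ((lv_summable_n x).mul_left 2)).add
    ((Real.summable_pow_div_factorial x).mul_left 2)

lemma lv_tsum_B (x : ℝ) :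
    ∑' m : ℕ, ((m:ℝ) - 1) * ((m:ℝ) - 2) * x ^ m / (m.factorial : ℝ)
      = x ^ 2 * Real.exp x - 2 * (x * Real.exp x) + 2 * Real.exp x := by
  rw [lv_B_eq]
  rw [Summable.tsum_add (((lv_summable_nn x).sub ((lv_summable_n x).mul_left 2)))
      ((Real.summable_pow_div_factorial x).mul_left 2),
    Summable.tsum_sub (lv_summable_nn x) ((lv_summable_n x).mul_left 2),
    tsum_mul_left, tsum_mul_left, lv_tsum_nn, lv_tsum_n, exp_tsum]

lemma lv_tsum_Bshift (x : ℝ) :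
    ∑' n : ℕ, (((n+1:ℕ):ℝ) - 1) * (((n+1:ℕ):ℝ) - 2) * x ^ (n+1) / (((n+1).factorial : ℝ))
      = x ^ 2 * Real.exp x - 2 * (x * Real.exp x) + 2 * Real.exp x - 2 := by
  have h := Summable.tsum_eq_zero_add (lv_summable_B x)
  rw [lv_tsum_B] at h
  have h0 : (((0:ℕ):ℝ) - 1) * (((0:ℕ):ℝ) - 2) * x ^ 0 / (((0:ℕ).factorial : ℝ)) = 2 := by
    norm_num
  rw [h0] at h
  linarith [h]


theorem laplace_variance_series (t : ℝ) (ht : 0 < t) :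
    ∑' n : ℕ, (∑ k ∈ Finset.range (n + 1),
        ((k : ℝ) * ((n : ℝ) - k) / ((n : ℝ) + 1)) *
          (1 / ((k.factorial : ℝ) * ((n - k).factorial : ℝ)))) * (-t) ^ n =
      Real.exp (-2 * t) / (4 * t) * (Real.exp (2 * t) - (2 * t ^ 2 + 2 * t + 1)) := by
  have ht' : t ≠ 0 := ne_of_gt ht
  have hterm : ∀ n : ℕ,
      (∑ k ∈ Finset.range (n + 1),
        ((k : ℝ) * ((n : ℝ) - k) / ((n : ℝ) + 1)) *
          (1 / ((k.factorial : ℝ) * ((n - k).factorial : ℝ)))) * (-t) ^ n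
      = (1 / (4 * (-2 * t))) *
          ((((n+1:ℕ):ℝ) - 1) * (((n+1:ℕ):ℝ) - 2) * (-2 * t) ^ (n+1) / (((n+1).factorial : ℝ))) := by
    intro n
    have hsum : (∑ k ∈ Finset.range (n + 1),
        ((k : ℝ) * ((n : ℝ) - k) / ((n : ℝ) + 1)) *
          (1 / ((k.factorial : ℝ) * ((n - k).factorial : ℝ))))
        = (∑ k ∈ Finset.range (n + 1),
            ((k : ℝ) * ((n : ℝ) - k)) * (1 / ((k.factorial : ℝ) * ((n - k).factorial : ℝ))))
          / ((n : ℝ) + 1) := by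
      rw [Finset.sum_div]
      congr 1 with k
      ring
    rw [hsum, lv_inner_sum]
    have hfac : (((n+1).factorial : ℝ)) = ((n:ℝ) + 1) * (n.factorial : ℝ) := by
      rw [Nat.factorial_succ]; push_cast; ring
    have hp : (-2 * t) ^ (n+1) = (-2 * t) * (2 ^ n * (-t) ^ n) := by
      rw [pow_succ, show (-2 * t) = 2 * (-t) by ring, mul_pow]; ring
    have h1 : (n.factorial : ℝ) ≠ 0 := Nat.cast_ne_zero.mpr n.factorial_ne_zero
    have h2 : (n:ℝ) + 1 ≠ 0 := by positivity
    rw [hfac, hp]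
    push_cast
    field_simp
    ring
  rw [tsum_congr hterm, tsum_mul_left, lv_tsum_Bshift (-2 * t)]
  have h1 : Real.exp (-2 * t) * Real.exp (2 * t) = 1 := by
    rw [← Real.exp_add]; norm_num
  field_simp
  rw [show -(2 * t) = -2 * t from by ring]
  linear_combination (-1) * h1
end

section
/- Let F : [0,∞) → ℝ be given by F(t) = Σ_{n=0}^∞ a_n t^n (absolutely convergent for all t ≥ 0) and define f(t) = Σ_{n=0}^∞ b_n t^n with b_n = (√π Γ((n+d)/2)/(Γ(d/2) Γ((n+1)/2))) a_n, assuming this series converges absolutely. Then for d ≥ 2 and all x ∈ ℝ^d: E_{ξ∼U(S^{d-1})}[f(|⟨ξ,x⟩|)] = F(‖x‖). -/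
open Real MeasureTheory RealInnerProductSpace

section Aux

open MeasureTheory.Measure Set Metric Module


lemma integral_volumeIoiPow_aux (m : ℕ) (g : ℝ → ℝ) :
    ∫ x : Set.Ioi (0:ℝ), g x ∂(Measure.volumeIoiPow m)
      = ∫ r in Set.Ioi (0:ℝ), r ^ m * g r := by
  simp only [Measure.volumeIoiPow, ENNReal.ofReal]
  rw [integral_withDensity_eq_integral_smul
      ((measurable_subtype_coe.pow_const _).real_toNNReal),
    integral_subtype_comap measurableSet_Ioi fun a ↦ Real.toNNReal (a ^ m) • g a,
    setIntegral_congr_fun measurableSet_Ioi fun x hx ↦ ?_]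
  rw [NNReal.smul_def, Real.coe_toNNReal _ (pow_nonneg hx.out.le _), smul_eq_mul]

open RealInnerProductSpace in
lemma polar_aux (d n : ℕ) (hd : 2 ≤ d) (y : EuclideanSpace ℝ (Fin d)) :
    ∫ x : EuclideanSpace ℝ (Fin d), Real.exp (-‖x‖^2) * |⟪x, y⟫|^n
      = (∫ ξ : Metric.sphere (0 : EuclideanSpace ℝ (Fin d)) 1,
          |⟪(ξ : EuclideanSpace ℝ (Fin d)), y⟫|^n
            ∂((volume : Measure (EuclideanSpace ℝ (Fin d))).toSphere))
        * ((1/2) * Real.Gamma ((n + d : ℝ)/2)) := by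
  haveI : Fact (1 ≤ d) := ⟨by omega⟩
  haveI : Nonempty (Fin d) := ⟨⟨0, by omega⟩⟩
  have hfr : finrank ℝ (EuclideanSpace ℝ (Fin d)) = d := finrank_euclideanSpace_fin
  set g : Metric.sphere (0:EuclideanSpace ℝ (Fin d)) 1 × Set.Ioi (0:ℝ) → ℝ :=
    fun p => |⟪(p.1 : EuclideanSpace ℝ (Fin d)), y⟫|^n
      * (Real.exp (-((p.2:ℝ))^2) * ((p.2:ℝ))^n) with hg
  calc ∫ x : EuclideanSpace ℝ (Fin d), Real.exp (-‖x‖^2) * |⟪x, y⟫|^n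
      = ∫ x : ({(0:EuclideanSpace ℝ (Fin d))}ᶜ : Set (EuclideanSpace ℝ (Fin d))),
          Real.exp (-‖(x:EuclideanSpace ℝ (Fin d))‖^2)
            * |⟪(x:EuclideanSpace ℝ (Fin d)), y⟫|^n
          ∂((volume : Measure (EuclideanSpace ℝ (Fin d))).comap (↑)) := by
        rw [integral_subtype_comap (measurableSet_singleton _).compl
          fun x ↦ Real.exp (-‖x‖^2) * |⟪x, y⟫|^n, MeasureTheory.restrict_compl_singleton]
    _ = ∫ x : ({(0:EuclideanSpace ℝ (Fin d))}ᶜ : Set (EuclideanSpace ℝ (Fin d))),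
          g (homeomorphUnitSphereProd (EuclideanSpace ℝ (Fin d)) x)
          ∂((volume : Measure (EuclideanSpace ℝ (Fin d))).comap (↑)) := by
        refine integral_congr_ae (Filter.Eventually.of_forall fun x => ?_)
        have hx : (x : EuclideanSpace ℝ (Fin d)) ≠ 0 := x.2
        have hn : ‖(x:EuclideanSpace ℝ (Fin d))‖ ≠ 0 := norm_ne_zero_iff.2 hx
        simp only [hg, homeomorphUnitSphereProd_apply_fst_coe,
          homeomorphUnitSphereProd_apply_snd_coe, real_inner_smul_left]
        rw [abs_mul, mul_pow, abs_inv, abs_norm]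
        rw [mul_comm (‖(x:EuclideanSpace ℝ (Fin d))‖⁻¹ ^ n * _), ← mul_assoc,
          mul_assoc _ _ (‖(x:EuclideanSpace ℝ (Fin d))‖⁻¹ ^ n)]
        rw [← mul_pow, mul_inv_cancel₀ hn, one_pow, mul_one, mul_comm]
    _ = ∫ p : Metric.sphere (0:EuclideanSpace ℝ (Fin d)) 1 × Set.Ioi (0:ℝ), g p
          ∂(((volume : Measure (EuclideanSpace ℝ (Fin d))).toSphere).prod
            (Measure.volumeIoiPow (finrank ℝ (EuclideanSpace ℝ (Fin d)) - 1))) :=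
        (volume : Measure (EuclideanSpace ℝ (Fin d))).measurePreserving_homeomorphUnitSphereProd.integral_comp
          (Homeomorph.measurableEmbedding _) g
    _ = (∫ ξ : Metric.sphere (0:EuclideanSpace ℝ (Fin d)) 1,
            |⟪(ξ:EuclideanSpace ℝ (Fin d)), y⟫|^n
            ∂(volume : Measure (EuclideanSpace ℝ (Fin d))).toSphere)
          * (∫ r : Set.Ioi (0:ℝ), Real.exp (-((r:ℝ))^2) * ((r:ℝ))^n
              ∂(Measure.volumeIoiPow (finrank ℝ (EuclideanSpace ℝ (Fin d)) - 1))) :=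
        integral_prod_mul (fun ξ : Metric.sphere (0:EuclideanSpace ℝ (Fin d)) 1 =>
            |⟪(ξ:EuclideanSpace ℝ (Fin d)), y⟫|^n)
          (fun r : Set.Ioi (0:ℝ) => Real.exp (-((r:ℝ))^2) * ((r:ℝ))^n)
    _ = _ := by
        rw [hfr, integral_volumeIoiPow_aux (d-1) (fun r => Real.exp (-r^2) * r^n)]
        congr 1
        rw [show ∫ r in Set.Ioi (0:ℝ), r ^ (d-1) * (Real.exp (-r^2) * r^n)
            = ∫ r in Set.Ioi (0:ℝ), r ^ ((n + d - 1 : ℝ)) * Real.exp (-r ^ (2:ℝ)) from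
          setIntegral_congr_fun measurableSet_Ioi fun r hr => ?_]
        · rw [integral_rpow_mul_exp_neg_rpow two_pos (by
            have h2 : (2:ℝ) ≤ (d:ℝ) := by exact_mod_cast hd
            have h3 : (0:ℝ) ≤ (n:ℝ) := n.cast_nonneg
            linarith)]
          ring_nf
        · have hr0 : (0:ℝ) < r := hr
          rw [show r ^ (2:ℝ) = r ^ (2:ℕ) by
              rw [← Real.rpow_natCast r 2]; norm_num, show (n + d - 1 : ℝ) = ((n + (d-1) : ℕ) : ℝ) by
            push_cast [Nat.cast_sub (by omega : 1 ≤ d)]; ring]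
          rw [Real.rpow_natCast]
          rw [pow_add]
          ring

lemma gauss_onedim (n : ℕ) :
    ∫ t : ℝ, Real.exp (-t^2) * |t|^n = Real.Gamma ((n+1:ℝ)/2) := by
  have h1 : ∀ t : ℝ, Real.exp (-t^2) * |t|^n
      = (fun s : ℝ => s^n * Real.exp (-s^2)) |t| := by
    intro t; simp [sq_abs]; ring
  simp_rw [h1]
  rw [integral_comp_abs (f := fun s : ℝ => s^n * Real.exp (-s^2))]
  rw [show ∫ r in Set.Ioi (0:ℝ), r ^ n * Real.exp (-r^2)
      = ∫ r in Set.Ioi (0:ℝ), r ^ ((n:ℝ)) * Real.exp (-r ^ (2:ℝ)) from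
    setIntegral_congr_fun measurableSet_Ioi fun r hr => by
      rw [Real.rpow_natCast, show r ^ (2:ℝ) = r ^ (2:ℕ) by
        rw [← Real.rpow_natCast r 2]; norm_num]]
  rw [integral_rpow_mul_exp_neg_rpow two_pos (lt_of_lt_of_le neg_one_lt_zero n.cast_nonneg)]
  ring_nf

open RealInnerProductSpace in
lemma gauss_aux (d n : ℕ) (hd : 2 ≤ d) (y : EuclideanSpace ℝ (Fin d)) (hy : y ≠ 0) :
    ∫ x : EuclideanSpace ℝ (Fin d), Real.exp (-‖x‖^2) * |⟪x, y⟫|^n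
      = ‖y‖^n * Real.Gamma ((n+1:ℝ)/2) * (Real.sqrt π)^(d-1) := by
  haveI : Fact (1 ≤ d) := ⟨by omega⟩
  haveI : NeZero d := ⟨by omega⟩
  set u : EuclideanSpace ℝ (Fin d) := ‖y‖⁻¹ • y with hu
  have hun : ‖u‖ = 1 := norm_smul_inv_norm hy
  have hortho : Orthonormal ℝ (Set.restrict {(0 : Fin d)} (fun _ => u)) := by
    rw [orthonormal_iff_ite]
    intro i j
    have hij : i = j := Subtype.ext (by
      have h1 := i.2; have h2 := j.2
      simp only [Set.mem_singleton_iff] at h1 h2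
      rw [h1, h2])
    subst hij
    rw [if_pos rfl]
    show (⟪u, u⟫ : ℝ) = 1
    rw [real_inner_self_eq_norm_mul_norm, hun]; norm_num
  obtain ⟨b, hb⟩ := hortho.exists_orthonormalBasis_extension_of_card_eq
    (by simp [finrank_euclideanSpace_fin])
  have hb0 : b 0 = u := hb 0 rfl
  have hyy : y = ‖y‖ • u := by rw [hu, smul_inv_smul₀ (norm_ne_zero_iff.2 hy)]
  have hinner : ∀ x : EuclideanSpace ℝ (Fin d), ⟪x, y⟫ = ‖y‖ * (b.repr x 0) := by
    intro x
    have h5 : (⟪x, u⟫ : ℝ) = b.repr x 0 := by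
      rw [← hb0, real_inner_comm, ← OrthonormalBasis.repr_apply_apply]
    conv_lhs => rw [hyy]
    rw [real_inner_smul_right, h5]
  have hcomp : ∀ x : EuclideanSpace ℝ (Fin d),
      Real.exp (-‖x‖^2) * |⟪x, y⟫|^n
        = (fun z : EuclideanSpace ℝ (Fin d) => Real.exp (-‖z‖^2) * (‖y‖ * |z 0|)^n)
            (b.measurableEquiv x) := by
    intro x
    simp only [hinner x]
    have hnorm : ‖(b.measurableEquiv x : EuclideanSpace ℝ (Fin d))‖ = ‖x‖ :=
      b.repr.norm_map x
    have hcoord : (b.measurableEquiv x : EuclideanSpace ℝ (Fin d)) 0 = b.repr x 0 := rfl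
    rw [hnorm, hcoord, abs_mul, abs_norm]
  simp_rw [hcomp]
  rw [b.measurePreserving_measurableEquiv.integral_comp'
    (fun z : EuclideanSpace ℝ (Fin d) => Real.exp (-‖z‖^2) * (‖y‖ * |z 0|)^n)]
  have hcomp2 : ∀ z : EuclideanSpace ℝ (Fin d),
      Real.exp (-‖z‖^2) * (‖y‖ * |z 0|)^n
        = (fun w : Fin d → ℝ => ‖y‖^n * ∏ i : Fin d,
            (if i = 0 then Real.exp (-(w i)^2) * |w i|^n else Real.exp (-(w i)^2)))
          ((MeasurableEquiv.toLp 2 (Fin d → ℝ)).symm z) := by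
    intro z
    have hz : ‖z‖^2 = ∑ i, (z i)^2 := by
      rw [EuclideanSpace.norm_eq, Real.sq_sqrt (by positivity)]
      simp [sq_abs]
    have hw : ∀ i, ((MeasurableEquiv.toLp 2 (Fin d → ℝ)).symm z) i = z i := fun _ => rfl
    simp only [hw, hz]
    rw [← Finset.sum_neg_distrib, Real.exp_sum]
    rw [show (∏ i : Fin d, (if i = 0 then Real.exp (-(z i)^2) * |z i|^n
          else Real.exp (-(z i)^2)))
        = (Real.exp (-(z 0)^2) * |z 0|^n) * ∏ i ∈ Finset.univ.erase 0,
            Real.exp (-(z i)^2) by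
      rw [← Finset.mul_prod_erase Finset.univ _ (Finset.mem_univ (0 : Fin d)), if_pos rfl]
      congr 1
      exact Finset.prod_congr rfl fun x hx => if_neg (Finset.ne_of_mem_erase hx)]
    rw [show (∏ i : Fin d, Real.exp (-(z i)^2))
        = Real.exp (-(z 0)^2) * ∏ i ∈ Finset.univ.erase 0, Real.exp (-(z i)^2) from
      (Finset.mul_prod_erase Finset.univ _ (Finset.mem_univ (0 : Fin d))).symm]
    rw [mul_pow]
    ring
  simp_rw [hcomp2]
  rw [(EuclideanSpace.volume_preserving_symm_measurableEquiv_toLp (Fin d)).integral_comp'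
    (fun w : Fin d → ℝ => ‖y‖^n * ∏ i : Fin d,
      (if i = 0 then Real.exp (-(w i)^2) * |w i|^n else Real.exp (-(w i)^2)))]
  rw [MeasureTheory.integral_const_mul]
  rw [MeasureTheory.integral_fintype_prod_volume_eq_prod (ι := Fin d)
    (fun i t => if i = 0 then Real.exp (-t^2) * |t|^n else Real.exp (-t^2))]
  have hg1 : ∫ t : ℝ, Real.exp (-t^2) = Real.sqrt π := by
    have h := integral_gaussian 1
    simpa using h
  have hint : ∀ i : Fin d,
      (∫ t : ℝ, if i = 0 then Real.exp (-t^2) * |t|^n else Real.exp (-t^2))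
        = if i = 0 then Real.Gamma ((n+1:ℝ)/2) else Real.sqrt π := by
    intro i
    by_cases h : i = 0
    · simp only [h, if_pos rfl]; exact gauss_onedim n
    · simp only [if_neg h]; exact hg1
  simp_rw [hint]
  rw [← Finset.mul_prod_erase Finset.univ _ (Finset.mem_univ (0 : Fin d)), if_pos rfl]
  rw [Finset.prod_congr rfl fun x hx =>
    if_neg (Finset.ne_of_mem_erase hx)]
  rw [Finset.prod_const, Finset.card_erase_of_mem (Finset.mem_univ _),
    Finset.card_univ, Fintype.card_fin]
  ring

open RealInnerProductSpace in
lemma toSphere_univ_toReal_s15 (d : ℕ) (hd : 2 ≤ d) :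
    ((volume : Measure (EuclideanSpace ℝ (Fin d))).toSphere Set.univ).toReal
      = 2 * (Real.sqrt π)^d / Real.Gamma ((d:ℝ)/2) := by
  haveI : NeZero d := ⟨by omega⟩
  set y₀ : EuclideanSpace ℝ (Fin d) := EuclideanSpace.single 0 1 with hy₀
  have hy0 : y₀ ≠ 0 := by
    simp [hy₀, ← norm_pos_iff, EuclideanSpace.norm_single]
  have h1 := polar_aux d 0 hd y₀
  have h2 := gauss_aux d 0 hd y₀ hy0
  rw [h2] at h1
  simp only [pow_zero, one_mul, mul_one] at h1
  rw [MeasureTheory.integral_const, smul_eq_mul, mul_one] at h1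
  simp only [Nat.cast_zero, zero_add] at h1
  rw [Real.Gamma_one_half_eq] at h1
  have hΓ : 0 < Real.Gamma ((d:ℝ)/2) := Real.Gamma_pos_of_pos (by positivity)
  have hs : 0 < Real.sqrt π := Real.sqrt_pos.2 pi_pos
  have hsd : Real.sqrt π * (Real.sqrt π)^(d-1) = (Real.sqrt π)^d := by
    rw [← pow_succ']
    congr 1
    omega
  rw [hsd] at h1
  rw [eq_div_iff (ne_of_gt hΓ)]
  rw [measureReal_def] at h1
  linarith [h1]

open RealInnerProductSpace in
lemma moment_aux (d n : ℕ) (hd : 2 ≤ d) (y : EuclideanSpace ℝ (Fin d)) :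
    ∫ ξ : Metric.sphere (0 : EuclideanSpace ℝ (Fin d)) 1,
        |⟪(ξ : EuclideanSpace ℝ (Fin d)), y⟫|^n ∂(uniformSphere d)
      = ‖y‖^n * (Real.Gamma ((n+1:ℝ)/2) * Real.Gamma ((d:ℝ)/2)
          / (Real.sqrt π * Real.Gamma ((n+d:ℝ)/2))) := by
  haveI : NeZero d := ⟨by omega⟩
  have hΓd : 0 < Real.Gamma ((d:ℝ)/2) := Real.Gamma_pos_of_pos (by positivity)
  have hΓnd : 0 < Real.Gamma ((n+d:ℝ)/2) := Real.Gamma_pos_of_pos (by positivity)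
  have hΓn1 : 0 < Real.Gamma ((n+1:ℝ)/2) := Real.Gamma_pos_of_pos (by positivity)
  have hs : 0 < Real.sqrt π := Real.sqrt_pos.2 pi_pos
  have hctr : ((volume : Measure (EuclideanSpace ℝ (Fin d))).toSphere Set.univ).toReal
      = 2 * (Real.sqrt π)^d / Real.Gamma ((d:ℝ)/2) := toSphere_univ_toReal_s15 d hd
  have hcpos : 0 < ((volume : Measure (EuclideanSpace ℝ (Fin d))).toSphere Set.univ).toReal := by
    rw [hctr]; positivity
  rw [uniformSphere, MeasureTheory.integral_smul_measure, ENNReal.toReal_inv, smul_eq_mul]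
  have hsd : Real.sqrt π * (Real.sqrt π)^(d-1) = (Real.sqrt π)^d := by
    rw [← pow_succ']; congr 1; omega
  by_cases hy : y = 0
  · subst hy
    rcases Nat.eq_zero_or_pos n with hn | hn
    · subst hn
      simp only [inner_zero_right, abs_zero, pow_zero, norm_zero]
      rw [MeasureTheory.integral_const, smul_eq_mul, mul_one, measureReal_def,
        inv_mul_cancel₀ (ne_of_gt hcpos), one_mul]
      rw [show (((0:ℕ):ℝ)+1)/2 = 1/2 by norm_num, Real.Gamma_one_half_eq,
        show (((0:ℕ):ℝ)+(d:ℝ))/2 = (d:ℝ)/2 by norm_num]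
      rw [div_self (by positivity)]
    · simp only [inner_zero_right, abs_zero, norm_zero,
        zero_pow hn.ne', MeasureTheory.integral_zero, mul_zero, zero_mul]
  · have h1 := polar_aux d n hd y
    have h2 := gauss_aux d n hd y hy
    rw [h2] at h1
    have hT : (∫ ξ : Metric.sphere (0 : EuclideanSpace ℝ (Fin d)) 1,
          |⟪(ξ : EuclideanSpace ℝ (Fin d)), y⟫|^n
          ∂(volume : Measure (EuclideanSpace ℝ (Fin d))).toSphere)
        = ‖y‖^n * Real.Gamma ((n+1:ℝ)/2) * (Real.sqrt π)^(d-1)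
            / ((1/2) * Real.Gamma ((n+d:ℝ)/2)) := by
      rw [eq_div_iff (by positivity), h1]
    rw [hT, hctr]
    field_simp
    rw [← hsd]
    ring

end Aux

theorem sliced_kernel_of_power_series (d : ℕ) (hd : 2 ≤ d) (a : ℕ → ℝ) (F f : ℝ → ℝ)
    (hF : ∀ t : ℝ, F t = ∑' n : ℕ, a n * t ^ n)
    (ha : ∀ t : ℝ, 0 ≤ t → Summable fun n : ℕ => |a n| * t ^ n)
    (hf : ∀ t : ℝ, f t = ∑' n : ℕ,
      (Real.sqrt π * Gamma (((n : ℝ) + d) / 2) /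
        (Gamma ((d : ℝ) / 2) * Gamma (((n : ℝ) + 1) / 2))) * a n * t ^ n)
    (hb : ∀ t : ℝ, 0 ≤ t → Summable fun n : ℕ =>
      |(Real.sqrt π * Gamma (((n : ℝ) + d) / 2) /
        (Gamma ((d : ℝ) / 2) * Gamma (((n : ℝ) + 1) / 2))) * a n| * t ^ n) :
    ∀ x : EuclideanSpace ℝ (Fin d),
      ∫ ξ : Metric.sphere (0 : EuclideanSpace ℝ (Fin d)) 1,
        f |⟪(ξ : EuclideanSpace ℝ (Fin d)), x⟫| ∂(uniformSphere d) = F ‖x‖ := by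
  intro x
  haveI : NeZero d := ⟨by omega⟩
  have hs : 0 < Real.sqrt π := Real.sqrt_pos.2 pi_pos
  have hΓd : 0 < Real.Gamma ((d:ℝ)/2) := Real.Gamma_pos_of_pos (by positivity)
  -- `uniformSphere d` is a probability measure
  have hc0 : ((volume : Measure (EuclideanSpace ℝ (Fin d))).toSphere Set.univ) ≠ 0 := by
    intro h
    have := toSphere_univ_toReal_s15 d hd
    rw [h] at this
    simp only [ENNReal.toReal_zero] at this
    have h2 : (0:ℝ) < 2 * (Real.sqrt π)^d / Real.Gamma ((d:ℝ)/2) := by positivity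
    linarith
  have hctop : ((volume : Measure (EuclideanSpace ℝ (Fin d))).toSphere Set.univ) ≠ ⊤ :=
    MeasureTheory.measure_ne_top _ _
  haveI hprob : IsProbabilityMeasure (uniformSphere d) := by
    constructor
    rw [uniformSphere, MeasureTheory.Measure.smul_apply, smul_eq_mul,
      ENNReal.inv_mul_cancel hc0 hctop]
  set c : ℕ → ℝ := fun n => (Real.sqrt π * Real.Gamma (((n : ℝ) + d) / 2) /
      (Real.Gamma ((d : ℝ) / 2) * Real.Gamma (((n : ℝ) + 1) / 2))) * a n with hc
  set Fn : ℕ → Metric.sphere (0 : EuclideanSpace ℝ (Fin d)) 1 → ℝ :=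
    fun n ξ => c n * |⟪(ξ : EuclideanSpace ℝ (Fin d)), x⟫| ^ n with hFn
  have hcont : ∀ n, Continuous (Fn n) := fun n =>
    continuous_const.mul (((continuous_subtype_val.inner continuous_const).abs).pow n)
  have hbound : ∀ n ξ, ‖Fn n ξ‖ ≤ |c n| * ‖x‖ ^ n := by
    intro n ξ
    have h1 : |⟪(ξ : EuclideanSpace ℝ (Fin d)), x⟫| ≤ ‖x‖ := by
      have := abs_real_inner_le_norm (ξ : EuclideanSpace ℝ (Fin d)) x
      rwa [norm_eq_of_mem_sphere ξ, one_mul] at this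
    have h2 : |⟪(ξ : EuclideanSpace ℝ (Fin d)), x⟫| ^ n ≤ ‖x‖ ^ n :=
      pow_le_pow_left₀ (abs_nonneg _) h1 n
    rw [hFn]
    simp only [Real.norm_eq_abs, abs_mul, abs_pow, abs_abs]
    exact mul_le_mul_of_nonneg_left h2 (abs_nonneg _)
  have hint : ∀ n, Integrable (Fn n) (uniformSphere d) := fun n =>
    Integrable.mono' (integrable_const (|c n| * ‖x‖ ^ n))
      (hcont n).aestronglyMeasurable (Filter.Eventually.of_forall (hbound n))
  have hsum : Summable fun n => ∫ ξ, ‖Fn n ξ‖ ∂(uniformSphere d) := by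
    refine Summable.of_nonneg_of_le
      (fun n => MeasureTheory.integral_nonneg fun ξ => norm_nonneg _)
      (fun n => ?_) (hb ‖x‖ (norm_nonneg x))
    calc ∫ ξ, ‖Fn n ξ‖ ∂(uniformSphere d)
        ≤ ∫ _ξ : Metric.sphere (0 : EuclideanSpace ℝ (Fin d)) 1,
            (|c n| * ‖x‖ ^ n) ∂(uniformSphere d) :=
          MeasureTheory.integral_mono (hint n).norm (integrable_const _) (hbound n)
      _ = |c n| * ‖x‖ ^ n := by
          rw [MeasureTheory.integral_const, measureReal_def, measure_univ, ENNReal.toReal_one, one_smul]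
  calc ∫ ξ : Metric.sphere (0 : EuclideanSpace ℝ (Fin d)) 1,
        f |⟪(ξ : EuclideanSpace ℝ (Fin d)), x⟫| ∂(uniformSphere d)
      = ∫ ξ : Metric.sphere (0 : EuclideanSpace ℝ (Fin d)) 1,
          (∑' n : ℕ, Fn n ξ) ∂(uniformSphere d) := by
        refine MeasureTheory.integral_congr_ae (Filter.Eventually.of_forall fun ξ => ?_)
        show f |⟪(ξ : EuclideanSpace ℝ (Fin d)), x⟫| = ∑' n : ℕ, Fn n ξ
        rw [hf]
    _ = ∑' n : ℕ, ∫ ξ, Fn n ξ ∂(uniformSphere d) :=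
        (MeasureTheory.integral_tsum_of_summable_integral_norm hint hsum).symm
    _ = ∑' n : ℕ, a n * ‖x‖ ^ n := by
        refine tsum_congr fun n => ?_
        rw [hFn]
        simp only
        rw [MeasureTheory.integral_const_mul, moment_aux d n hd x, hc]
        have hΓn1 : 0 < Real.Gamma (((n:ℝ)+1)/2) := Real.Gamma_pos_of_pos (by positivity)
        have hΓnd : 0 < Real.Gamma (((n:ℝ)+(d:ℝ))/2) := Real.Gamma_pos_of_pos (by positivity)
        field_simp
    _ = F ‖x‖ := (hF _).symm
end
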